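/- arXiv:1210.1621 — 8 statements merged into one kernel-verified Lean document; each statement's English description precedes it below -/
import Mathlib

section
/- Assume c : ℕ → F satisfies c_0 = 0 and that Σ_{i=1}^n R_i q_{n−i} = c_n q_n holds in A for every n ≥ 1. Then for every partition λ = (λ_1,…,λ_s) of length s there exist coefficients c_{λμ} ∈ F, indexed by the partitions μ of weight |λ| with μ ≥ λ in dominance order, such that T.q_λ = Σ_{μ ⊢ |λ|, μ ≥ λ} c_{λμ} q_μ, each c_{λμ} lies in the additive subgroup of F generated by {c_k : k ≥ 1}, and c_{λλ} = (−1)^{s−1} c_{λ_s}. -/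
open Finset

/-- A partition as a weakly decreasing list of positive integers. -/
def IsPartitionList (l : List ℕ) : Prop := l.Pairwise (· ≥ ·) ∧ ∀ x ∈ l, 0 < x

/-- Dominance order: every partial sum of `μ` is at least that of `l`
(parts padded by zeros). -/
def Dominates (μ l : List ℕ) : Prop := ∀ i : ℕ, (l.take i).sum ≤ (μ.take i).sum

/-- `q_λ = q_{λ₁} ⋯ q_{λ_s}`. -/
def qProd {A : Type*} [CommRing A] (q : ℤ → A) (l : List ℕ) : A := (l.map fun n => q n).prod

/-- `T.q_λ = Σ_{i₁,…,i_s ≥ 1} R_{i₁+⋯+i_s} q_{λ₁-i₁} ⋯ q_{λ_s-i_s}`, a finite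
sum because `q` vanishes on negative integers. -/
def Tq {A : Type*} [CommRing A] (R : ℕ → A) (q : ℤ → A) (l : List ℕ) : A :=
  ∑ i ∈ Finset.Icc (1 : Fin l.length → ℕ) (fun j => l.get j),
    R (∑ j, i j) * ∏ j, q ((l.get j : ℤ) - i j)

/-- The weakly decreasing list of elements of a multiset. -/
def sortDesc (m : Multiset ℕ) : List ℕ := Multiset.sort m (· ≥ ·)

/-- The partitions of weight `N`, as weakly decreasing lists. -/
def partitionsOfWeight (N : ℕ) : Finset (List ℕ) :=
  Finset.univ.image fun μ : Nat.Partition N => sortDesc μ.parts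

namespace GNIproof

lemma take_succ_sum_le {x : ℕ} {l' : List ℕ} (hx : ∀ b ∈ l', b ≤ x) (k : ℕ) :
    (l'.take (k+1)).sum ≤ x + (l'.take k).sum := by
  by_cases h : k < l'.length
  · rw [List.sum_take_succ l' k h, add_comm]
    exact Nat.add_le_add_right (hx _ (l'.getElem_mem h)) _
  · push_neg at h
    rw [List.take_of_length_le (by omega), List.take_of_length_le h]
    omega

lemma sum_le_sorted_take {l : List ℕ} (hs : l.Pairwise (· ≥ ·)) :
    ∀ (k : ℕ) (ξ : Multiset ℕ), ξ ≤ ↑l → Multiset.card ξ ≤ k → ξ.sum ≤ (l.take k).sum := by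
  induction l with
  | nil =>
    intro k ξ hle _
    have : ξ = 0 := Multiset.le_zero.mp (by simpa using hle)
    simp [this]
  | cons x l' ih =>
    intro k ξ hle hc
    obtain ⟨hx, hs'⟩ := List.pairwise_cons.mp hs
    rcases k with _ | k'
    · have : ξ = 0 := Multiset.card_eq_zero.mp (by omega)
      simp [this]
    by_cases hmem : x ∈ ξ
    · have h1 : ξ.erase x ≤ ↑l' := by
        have := Multiset.erase_le_erase x hle
        rwa [show ((x :: l' : List ℕ) : Multiset ℕ) = x ::ₘ ↑l' from rfl,
          Multiset.erase_cons_head] at this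
      have h2 : Multiset.card (ξ.erase x) ≤ k' := by
        rw [Multiset.card_erase_of_mem hmem, Nat.pred_eq_sub_one]
        have : 1 ≤ Multiset.card ξ := Multiset.card_pos_iff_exists_mem.mpr ⟨x, hmem⟩
        omega
      have h3 := ih hs' k' (ξ.erase x) h1 h2
      have h4 : ξ.sum = x + (ξ.erase x).sum := by
        conv_lhs => rw [← Multiset.cons_erase hmem]
        simp
      rw [h4, List.take_succ_cons, List.sum_cons]
      omega
    · have h1 : ξ ≤ ↑l' := by
        rw [Multiset.le_iff_count]
        intro y
        have := Multiset.le_iff_count.mp hle y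
        rw [show ((x :: l' : List ℕ) : Multiset ℕ) = x ::ₘ ↑l' from rfl] at this
        by_cases hyx : y = x
        · subst hyx; simp [Multiset.count_eq_zero_of_notMem hmem]
        · rwa [Multiset.count_cons_of_ne hyx] at this
      have h3 := ih hs' (k'+1) ξ h1 hc
      have h5 := take_succ_sum_le (fun b hb => hx b hb) k'
      rw [List.take_succ_cons, List.sum_cons]
      omega

lemma take_ofFn_sub_le : ∀ (n : ℕ) (v iv : Fin n → ℕ), (∀ j, iv j ≤ v j) → ∀ k,
    ((List.ofFn v).take k).sum ≤ ((List.ofFn (fun j => v j - iv j)).take k).sum + ∑ j, iv j := by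
  intro n
  induction n with
  | zero => intro v iv h k; simp
  | succ n ih =>
    intro v iv h k
    rcases k with _ | k'
    · simp
    · have hih := ih (fun j => v j.succ) (fun j => iv j.succ) (fun j => h j.succ) k'
      have h0 := h 0
      simp only [List.ofFn_succ, List.take_succ_cons, List.sum_cons, Fin.sum_univ_succ]
      omega

lemma filter_pos_sum (m : Multiset ℕ) : (Multiset.filter (fun n => 0 < n) m).sum = m.sum := by
  conv_rhs => rw [← Multiset.filter_add_not (fun n => 0 < n) m]
  rw [Multiset.sum_add]
  have : (Multiset.filter (fun n => ¬ 0 < n) m).sum = 0 :=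
    Multiset.sum_eq_zero (fun x hx => by have := (Multiset.mem_filter.mp hx).2; omega)
  omega

section Main
variable {F A : Type*} [Field F] [CommRing A] [Algebra F A]
variable (q : ℤ → A) (R : ℕ → A) (c : ℕ → F)

def ctil (n : ℤ) : F := if 1 ≤ n then c n.toNat else 0

def qM (ν : Multiset ℕ) : A := (ν.map fun n : ℕ => q (n:ℤ)).prod

noncomputable def evalP : (Multiset ℕ →₀ F) →ₗ[F] A :=
  Finsupp.lsum F fun ν => LinearMap.toSpanSingleton F A (qM q ν)

lemma evalP_single (ν : Multiset ℕ) (r : F) : evalP q (Finsupp.single ν r) = r • qM q ν := by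
  simp [evalP]

lemma qM_cons (x : ℕ) (ν : Multiset ℕ) : qM q (x ::ₘ ν) = q x * qM q ν := by
  simp [qM]

lemma qM_add (s t : Multiset ℕ) : qM q (s + t) = qM q s * qM q t := by
  simp [qM]

lemma qM_filter_pos (hq0 : q 0 = 1) (ν : Multiset ℕ) :
    qM q (Multiset.filter (fun n => 0 < n) ν) = qM q ν := by
  conv_rhs => rw [← Multiset.filter_add_not (fun n => 0 < n) ν]
  rw [qM_add]
  have h1 : qM q (Multiset.filter (fun a => ¬ 0 < a) ν) = 1 := by
    rw [qM]
    apply Multiset.prod_eq_one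
    intro x hx
    obtain ⟨y, hy, rfl⟩ := Multiset.mem_map.mp hx
    have : y = 0 := by
      have := (Multiset.mem_filter.mp hy).2
      omega
    simp [this, hq0]
  rw [h1, mul_one]

lemma evalP_mapDomain_cons (x : ℕ) (P : Multiset ℕ →₀ F) :
    evalP q (Finsupp.mapDomain (fun ν => x ::ₘ ν) P) = q x * evalP q P := by
  induction P using Finsupp.induction with
  | zero => simp [Finsupp.mapDomain_zero]
  | single_add ν r P hνP hr ih =>
    rw [Finsupp.mapDomain_add, map_add, map_add, ih, Finsupp.mapDomain_single,
      evalP_single, evalP_single, qM_cons, mul_add]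
    ring_nf
    rw [mul_smul_comm]

def Vsum (u : ℕ) (μ : List ℕ) : A :=
  ∑ i ∈ (Finset.Icc (1 : Fin μ.length → ℕ) (fun j => μ.get j)).filter
      (fun i => u < ∑ j, i j),
    R (∑ j, i j - u) * ∏ j, q ((μ.get j : ℤ) - i j)

lemma Vsum_nil (u : ℕ) : Vsum q R u [] = 0 := by
  rw [Vsum]
  rw [Finset.filter_false_of_mem (fun i _ => by simp)]
  exact Finset.sum_empty

lemma sum_get_eq (d : List ℕ) : ∑ j : Fin d.length, d.get j = d.sum := by
  rw [← List.sum_ofFn, List.ofFn_get]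

variable (hqneg : ∀ n : ℤ, n < 0 → q n = 0)
variable (hrec : ∀ n : ℕ, 1 ≤ n →
      ∑ i ∈ Finset.Icc 1 n, R i * q ((n : ℤ) - i) = c n • q ((n : ℤ)))

include hqneg hrec in
lemma single_sum (n : ℤ) (m : ℕ) (hm : n ≤ m) :
    ∑ k ∈ Finset.Ioc 0 m, R k * q (n - k) = ctil c n • q n := by
  by_cases hn : 1 ≤ n
  · set nn := n.toNat with hnn
    have hcast : (nn : ℤ) = n := Int.toNat_of_nonneg (by omega)
    have hnm : nn ≤ m := by omega
    have hsplit := Finset.sum_Ioc_consecutive (fun k => R k * q (n - k))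
      (Nat.zero_le nn) hnm
    have h2 : ∑ k ∈ Finset.Ioc nn m, R k * q (n - k) = 0 := by
      apply Finset.sum_eq_zero
      intro k hk
      rw [Finset.mem_Ioc] at hk
      rw [hqneg (n - k) (by omega), mul_zero]
    have h1 : ∑ k ∈ Finset.Ioc 0 nn, R k * q (n - k) = c nn • q n := by
      have := hrec nn (by omega)
      rw [show (1:ℕ) = 0 + 1 from rfl, Finset.Icc_add_one_left_eq_Ioc] at this
      rw [← hcast] at *
      exact this
    rw [← hsplit, h1, h2, add_zero, ctil, if_pos hn]
  · rw [ctil, if_neg hn, zero_smul]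
    apply Finset.sum_eq_zero
    intro k hk
    rw [Finset.mem_Ioc] at hk
    rw [hqneg (n - k) (by omega), mul_zero]

include hqneg hrec in
lemma innerSumLemma (a m u : ℕ) :
    ∑ i1 ∈ (Finset.Icc 1 a).filter (fun i1 => u < i1 + m), R (i1 + m - u) * q ((a:ℤ) - i1)
      = ctil c ((a:ℤ) + m - u) • q ((a:ℤ) + m - u)
        - ∑ k ∈ Finset.Ioc 0 (m - u), R k * q ((a:ℤ) + m - u - k) := by
  rcases le_or_gt u m with h | h
  · rw [Finset.filter_true_of_mem (fun i1 hi1 => by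
      rw [Finset.mem_Icc] at hi1; omega)]
    have hre : ∑ i1 ∈ Finset.Icc 1 a, R (i1 + m - u) * q ((a:ℤ) - i1)
        = ∑ k ∈ Finset.Ioc (m - u) (a + (m - u)), R k * q ((a:ℤ) + m - u - k) := by
      apply Finset.sum_nbij' (fun i1 => i1 + (m - u)) (fun k => k - (m - u))
      · intro i1 hi1; rw [Finset.mem_Icc] at hi1; rw [Finset.mem_Ioc]; omega
      · intro k hk; rw [Finset.mem_Ioc] at hk; rw [Finset.mem_Icc]; omega
      · intro i1 hi1; omega
      · intro k hk; rw [Finset.mem_Ioc] at hk; omega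
      · intro i1 hi1
        rw [Finset.mem_Icc] at hi1
        congr 1
        · congr 1; omega
        · congr 1; omega
    rw [hre]
    have hsplit := Finset.sum_Ioc_consecutive (fun k => R k * q ((a:ℤ) + m - u - k))
      (Nat.zero_le (m - u)) (by omega : m - u ≤ a + (m - u))
    have hfull : ∑ k ∈ Finset.Ioc 0 (a + (m - u)), R k * q ((a:ℤ) + m - u - k)
        = ctil c ((a:ℤ) + m - u) • q ((a:ℤ) + m - u) :=
      single_sum q R c hqneg hrec ((a:ℤ) + m - u) (a + (m - u)) (by omega)
    rw [← hfull]
    rw [eq_sub_iff_add_eq, add_comm]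
    exact hsplit
  · have h0 : m - u = 0 := by omega
    rw [h0]
    simp only [Finset.Ioc_self, Finset.sum_empty, sub_zero]
    have hfe : (Finset.Icc 1 a).filter (fun i1 => u < i1 + m) = Finset.Ioc (u - m) a := by
      ext i1
      simp only [Finset.mem_filter, Finset.mem_Icc, Finset.mem_Ioc]
      omega
    rw [hfe]
    rcases le_or_gt (a + m) u with hau | hau
    · rw [Finset.Ioc_eq_empty (by omega), Finset.sum_empty]
      rw [ctil, if_neg (by omega), zero_smul]
    · have hre : ∑ i1 ∈ Finset.Ioc (u - m) a, R (i1 + m - u) * q ((a:ℤ) - i1)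
          = ∑ k ∈ Finset.Ioc 0 (a - (u - m)), R k * q ((a:ℤ) + m - u - k) := by
        apply Finset.sum_nbij' (fun i1 => i1 - (u - m)) (fun k => k + (u - m))
        · intro i1 hi1; rw [Finset.mem_Ioc] at hi1; rw [Finset.mem_Ioc]; omega
        · intro k hk; rw [Finset.mem_Ioc] at hk; rw [Finset.mem_Ioc]; omega
        · intro i1 hi1; rw [Finset.mem_Ioc] at hi1; omega
        · intro k hk; omega
        · intro i1 hi1
          rw [Finset.mem_Ioc] at hi1
          congr 1
          · congr 1; omega
          · congr 1; omega
      rw [hre]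
      exact single_sum q R c hqneg hrec ((a:ℤ) + m - u) (a - (u - m)) (by omega)

include hqneg hrec in
lemma Vsum_cons (a : ℕ) (d : List ℕ) (u : ℕ) :
    Vsum q R u (a :: d)
      = (∑ i'' ∈ Finset.Icc (1 : Fin d.length → ℕ) (fun j => d.get j),
          ctil c ((a:ℤ) + ((∑ j, i'' j : ℕ) : ℤ) - (u:ℤ)) •
            (q ((a:ℤ) + ((∑ j, i'' j : ℕ) : ℤ) - (u:ℤ)) * ∏ j, q ((d.get j : ℤ) - i'' j)))
        - ∑ t ∈ Finset.range d.sum, q ((a:ℤ) + t) * Vsum q R (u + t) d := by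
  have step1 : Vsum q R u (a :: d) =
      ∑ p ∈ ((Finset.Icc (1 : Fin d.length → ℕ) (fun j => d.get j)) ×ˢ
          (Finset.Icc 1 a)).filter (fun p => u < p.2 + ∑ j, p.1 j),
        R (p.2 + (∑ j, p.1 j) - u) *
          (q ((a:ℤ) - p.2) * ∏ j, q ((d.get j:ℤ) - p.1 j)) := by
    rw [Vsum]
    simp only [List.length_cons, List.get_cons_zero, List.get_cons_succ]
    apply Finset.sum_nbij' (i := fun i => ((fun j => i j.succ), i 0))
      (j := fun p => Fin.cons p.2 p.1)
    · intro i hi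
      rw [Finset.mem_filter, Finset.mem_Icc] at hi
      obtain ⟨⟨h1, h2⟩, h3⟩ := hi
      rw [Finset.mem_filter, Finset.mem_product, Finset.mem_Icc, Finset.mem_Icc]
      refine ⟨⟨⟨fun j => h1 j.succ, fun j => h2 j.succ⟩, ⟨h1 0, h2 0⟩⟩, ?_⟩
      rw [Fin.sum_univ_succ] at h3
      exact h3
    · intro p hp
      rw [Finset.mem_filter, Finset.mem_product, Finset.mem_Icc, Finset.mem_Icc] at hp
      obtain ⟨⟨⟨h1, h2⟩, ⟨h3, h4⟩⟩, h5⟩ := hp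
      rw [Finset.mem_filter, Finset.mem_Icc]
      refine ⟨⟨?_, ?_⟩, ?_⟩
      · intro j
        induction j using Fin.cases with
        | zero => simpa using h3
        | succ j => simpa using h1 j
      · intro j
        induction j using Fin.cases with
        | zero => simpa using h4
        | succ j => simpa using h2 j
      · rw [Fin.sum_univ_succ]
        simpa using h5
    · intro i _
      funext j
      induction j using Fin.cases with
      | zero => simp
      | succ j => simp
    · intro p _
      ext j
      · simp
      · simp
    · intro i _
      rw [Fin.sum_univ_succ, Fin.prod_univ_succ]
      simp only [List.get_cons_zero]
      rfl
  rw [step1, Finset.sum_filter, Finset.sum_product]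
  have step3 : ∀ i'' ∈ Finset.Icc (1 : Fin d.length → ℕ) (fun j => d.get j),
      (∑ i1 ∈ Finset.Icc 1 a, if u < i1 + ∑ j, i'' j then
          R (i1 + (∑ j, i'' j) - u) * (q ((a:ℤ) - i1) * ∏ j, q ((d.get j:ℤ) - i'' j)) else 0)
      = ctil c ((a:ℤ) + ((∑ j, i'' j : ℕ) : ℤ) - (u:ℤ)) •
            (q ((a:ℤ) + ((∑ j, i'' j : ℕ) : ℤ) - (u:ℤ)) * ∏ j, q ((d.get j : ℤ) - i'' j))
        - (∑ k ∈ Finset.Ioc 0 ((∑ j, i'' j) - u), R k * q ((a:ℤ) + ((∑ j, i'' j : ℕ) : ℤ) - (u:ℤ) - k)) *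
            ∏ j, q ((d.get j : ℤ) - i'' j) := by
    intro i'' _
    rw [← Finset.sum_filter]
    have : ∀ i1 ∈ (Finset.Icc 1 a).filter (fun i1 => u < i1 + ∑ j, i'' j),
        R (i1 + (∑ j, i'' j) - u) * (q ((a:ℤ) - i1) * ∏ j, q ((d.get j:ℤ) - i'' j))
        = (R (i1 + (∑ j, i'' j) - u) * q ((a:ℤ) - i1)) * ∏ j, q ((d.get j:ℤ) - i'' j) := by
      intro i1 _; ring
    rw [Finset.sum_congr rfl this, ← Finset.sum_mul,
      innerSumLemma q R c hqneg hrec a (∑ j, i'' j) u, sub_mul, smul_mul_assoc]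
  rw [Finset.sum_congr rfl step3, Finset.sum_sub_distrib]
  congr 1
  have step5a : ∀ i'' ∈ Finset.Icc (1 : Fin d.length → ℕ) (fun j => d.get j),
      (∑ k ∈ Finset.Ioc 0 ((∑ j, i'' j) - u), R k * q ((a:ℤ) + ((∑ j, i'' j : ℕ) : ℤ) - (u:ℤ) - k)) *
            ∏ j, q ((d.get j : ℤ) - i'' j)
      = ∑ t ∈ Finset.range d.sum, (if u + t < ∑ j, i'' j then
          R ((∑ j, i'' j) - (u + t)) * (q ((a:ℤ) + t) * ∏ j, q ((d.get j : ℤ) - i'' j)) else 0) := by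
    intro i'' hi''
    have hm : (∑ j, i'' j) ≤ d.sum := by
      rw [← sum_get_eq]
      exact Finset.sum_le_sum (fun j _ => (Finset.mem_Icc.mp hi'').2 j)
    rw [Finset.sum_mul]
    have hre : ∑ k ∈ Finset.Ioc 0 ((∑ j, i'' j) - u),
        (R k * q ((a:ℤ) + ((∑ j, i'' j : ℕ) : ℤ) - (u:ℤ) - k)) * ∏ j, q ((d.get j : ℤ) - i'' j)
        = ∑ t ∈ Finset.range ((∑ j, i'' j) - u),
        R ((∑ j, i'' j) - (u + t)) * (q ((a:ℤ) + t) * ∏ j, q ((d.get j : ℤ) - i'' j)) := by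
      apply Finset.sum_nbij' (i := fun k => (∑ j, i'' j) - u - k) (j := fun t => (∑ j, i'' j) - u - t)
      · intro k hk; rw [Finset.mem_Ioc] at hk; rw [Finset.mem_range]; omega
      · intro t ht; rw [Finset.mem_range] at ht; rw [Finset.mem_Ioc]; omega
      · intro k hk; rw [Finset.mem_Ioc] at hk; omega
      · intro t ht; rw [Finset.mem_range] at ht; omega
      · intro k hk
        rw [Finset.mem_Ioc] at hk
        rw [mul_assoc]
        congr 2
        · congr 1; omega
        · congr 1; omega
    rw [hre]
    have hsub : Finset.range ((∑ j, i'' j) - u)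
        = (Finset.range d.sum).filter (fun t => u + t < ∑ j, i'' j) := by
      ext t
      simp only [Finset.mem_range, Finset.mem_filter]
      omega
    rw [hsub, Finset.sum_filter]
  rw [Finset.sum_congr rfl step5a, Finset.sum_comm]
  apply Finset.sum_congr rfl
  intro t _
  rw [Vsum, Finset.mul_sum, ← Finset.sum_filter]
  apply Finset.sum_congr rfl
  intro i'' _
  ring

include hqneg hrec in
lemma key (hq0 : q 0 = 1) :
    ∀ (μ : List ℕ), (∀ x ∈ μ, 0 < x) → μ.Pairwise (· ≥ ·) → ∀ u : ℕ,
    ∃ P : Multiset ℕ →₀ F,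
      (∀ ν, P ν ≠ 0 → (∀ x ∈ ν, 0 < x) ∧ ν.sum + u = μ.sum ∧
        ∀ i : ℕ, ∃ ξ ≤ ν, Multiset.card ξ ≤ i ∧ (μ.take i).sum ≤ ξ.sum + u) ∧
      Vsum q R u μ = evalP q P ∧
      (∀ ν, P ν ∈ AddSubgroup.closure {x : F | ∃ k : ℕ, 1 ≤ k ∧ x = c k}) ∧
      (u = 0 → ∀ hne : μ ≠ [], P ↑μ = (-1:F)^(μ.length-1) * c (μ.getLast hne)) := by
  intro μ
  induction μ with
  | nil =>
    intro _ _ u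
    refine ⟨0, ?_, ?_, ?_, ?_⟩
    · intro ν hν; simp at hν
    · rw [Vsum_nil]; simp
    · intro ν; simpa using AddSubgroup.zero_mem _
    · intro _ hne; exact absurd rfl hne
  | cons a d ih =>
    intro hpos hsort u
    have hdpos : ∀ x ∈ d, 0 < x := fun x hx => hpos x (List.mem_cons_of_mem _ hx)
    have ha : 0 < a := hpos a List.mem_cons_self
    obtain ⟨hadom, hdsort⟩ := List.pairwise_cons.mp hsort
    choose P'' hgood hval hclo hdiag using fun t : ℕ => ih hdpos hdsort (u + t)
    set mon : (Fin d.length → ℕ) → Multiset ℕ := fun i'' =>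
      (a + (∑ j, i'' j) - u) ::ₘ
        Multiset.filter (fun n => 0 < n) ↑(List.ofFn (fun j => d.get j - i'' j)) with hmon
    set coef : (Fin d.length → ℕ) → F := fun i'' =>
      ctil c ((a:ℤ) + ((∑ j, i'' j : ℕ) : ℤ) - (u:ℤ)) with hcoef
    set P1 : Multiset ℕ →₀ F := ∑ i'' ∈ Finset.Icc (1 : Fin d.length → ℕ) (fun j => d.get j),
      Finsupp.single (mon i'') (coef i'') with hP1
    set P2 : Multiset ℕ →₀ F := ∑ t ∈ Finset.range d.sum,
      Finsupp.mapDomain (fun ν => (a + t) ::ₘ ν) (P'' t) with hP2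
    have hwsum : ∀ i'' : Fin d.length → ℕ, (∀ j, i'' j ≤ d.get j) →
        (List.ofFn (fun j => d.get j - i'' j)).sum + (∑ j, i'' j) = d.sum := by
      intro i'' h
      rw [List.sum_ofFn, ← Finset.sum_add_distrib, ← sum_get_eq]
      exact Finset.sum_congr rfl fun j _ => Nat.sub_add_cancel (h j)
    refine ⟨P1 - P2, ?_, ?_, ?_, ?_⟩
    · -- support condition
      intro ν hν
      have hsplit : P1 ν ≠ 0 ∨ P2 ν ≠ 0 := by
        by_contra hcon
        push_neg at hcon
        rw [Finsupp.sub_apply, hcon.1, hcon.2, sub_zero] at hν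
        exact hν rfl
      rcases hsplit with h | h
      · rw [hP1, Finsupp.finset_sum_apply] at h
        obtain ⟨i'', hi'', hne0⟩ := Finset.exists_ne_zero_of_sum_ne_zero h
        rw [Finsupp.single_apply] at hne0
        by_cases heq : mon i'' = ν
        swap
        · rw [if_neg heq] at hne0; exact absurd rfl hne0
        rw [if_pos heq] at hne0
        subst heq
        rw [Finset.mem_Icc] at hi''
        have hle : ∀ j, i'' j ≤ d.get j := fun j => hi''.2 j
        have hn1 : (1:ℤ) ≤ (a:ℤ) + ((∑ j, i'' j : ℕ) : ℤ) - (u:ℤ) := by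
          by_contra hc1
          refine hne0 ?_
          simp only [hcoef]
          rw [ctil, if_neg hc1]
        have hun : u ≤ a + ∑ j, i'' j := by omega
        have hmsum : (mon i'').sum + u = (a :: d).sum := by
          simp only [hmon]
          simp only [Multiset.sum_cons, List.sum_cons]
          rw [filter_pos_sum]
          have e1 : (↑(List.ofFn (fun j => d.get j - i'' j)) : Multiset ℕ).sum
              = (List.ofFn (fun j => d.get j - i'' j)).sum := by simp
          have := hwsum i'' hle
          omega
        refine ⟨?_, hmsum, ?_⟩
        · intro x hx
          simp only [hmon] at hx
          rw [Multiset.mem_cons] at hx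
          rcases hx with rfl | hx
          · omega
          · exact (Multiset.mem_filter.mp hx).2
        · intro i
          rcases i with _ | i'
          · exact ⟨0, Multiset.zero_le _, by simp, by simp⟩
          · refine ⟨(a + (∑ j, i'' j) - u) ::ₘ
              Multiset.filter (fun n => 0 < n) ↑((List.ofFn (fun j => d.get j - i'' j)).take i'),
              ?_, ?_, ?_⟩
            · simp only [hmon]
              exact Multiset.cons_le_cons _ (Multiset.filter_le_filter _
                (Multiset.coe_le.mpr (List.Sublist.subperm (List.take_sublist _ _))))
            · rw [Multiset.card_cons]
              have h1 : Multiset.card (Multiset.filter (fun n => 0 < n)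
                  (↑((List.ofFn (fun j => d.get j - i'' j)).take i') : Multiset ℕ))
                  ≤ Multiset.card (↑((List.ofFn (fun j => d.get j - i'' j)).take i') : Multiset ℕ) :=
                Multiset.card_le_card (Multiset.filter_le _ _)
              have h2 : Multiset.card (↑((List.ofFn (fun j => d.get j - i'' j)).take i') : Multiset ℕ) ≤ i' := by
                rw [Multiset.coe_card]
                exact (List.length_take (i := i')).le.trans (min_le_left _ _)
              omega
            · simp only [List.take_succ_cons, List.sum_cons, Multiset.sum_cons]
              rw [filter_pos_sum]
              have e1 : (↑((List.ofFn (fun j => d.get j - i'' j)).take i') : Multiset ℕ).sum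
                  = ((List.ofFn (fun j => d.get j - i'' j)).take i').sum := by simp
              have hto := take_ofFn_sub_le d.length d.get i'' hle i'
              rw [List.ofFn_get] at hto
              rw [e1]
              omega
      · rw [hP2, Finsupp.finset_sum_apply] at h
        obtain ⟨t, ht, hne0⟩ := Finset.exists_ne_zero_of_sum_ne_zero h
        have hνs : ν ∈ (Finsupp.mapDomain (fun ν => (a + t) ::ₘ ν) (P'' t)).support :=
          Finsupp.mem_support_iff.mpr hne0
        obtain ⟨ν', hν's, heq⟩ := Finset.mem_image.mp (Finsupp.mapDomain_support hνs)
        obtain ⟨hp', hs', htake'⟩ := hgood t ν' (Finsupp.mem_support_iff.mp hν's)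
        subst heq
        refine ⟨?_, ?_, ?_⟩
        · intro x hx
          rcases Multiset.mem_cons.mp hx with rfl | hx
          · omega
          · exact hp' x hx
        · simp only [Multiset.sum_cons, List.sum_cons]
          omega
        · intro i
          rcases i with _ | i'
          · exact ⟨0, Multiset.zero_le _, by simp, by simp⟩
          · obtain ⟨ξ', hξ'le, hξ'c, hξ's⟩ := htake' i'
            refine ⟨(a+t) ::ₘ ξ', Multiset.cons_le_cons _ hξ'le, ?_, ?_⟩
            · rw [Multiset.card_cons]; omega
            · simp only [List.take_succ_cons, List.sum_cons, Multiset.sum_cons]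
              omega
    · -- value
      rw [Vsum_cons q R c hqneg hrec a d u, map_sub]
      congr 1
      · rw [hP1, map_sum]
        apply Finset.sum_congr rfl
        intro i'' hi''
        rw [evalP_single]
        rw [Finset.mem_Icc] at hi''
        have hle : ∀ j, i'' j ≤ d.get j := fun j => hi''.2 j
        simp only [hmon, hcoef]
        by_cases hc1 : (1:ℤ) ≤ (a:ℤ) + ((∑ j, i'' j : ℕ) : ℤ) - (u:ℤ)
        · have hcast : ((a + (∑ j, i'' j) - u : ℕ) : ℤ)
              = (a:ℤ) + ((∑ j, i'' j : ℕ) : ℤ) - (u:ℤ) := by omega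
          rw [qM_cons, qM_filter_pos q hq0]
          have hqm : qM q ↑(List.ofFn (fun j => d.get j - i'' j))
              = ∏ j, q ((d.get j : ℤ) - i'' j) := by
            rw [qM, Multiset.map_coe, Multiset.prod_coe, List.map_ofFn, List.prod_ofFn]
            apply Finset.prod_congr rfl
            intro j _
            have := hle j
            simp only [Function.comp_apply]
            congr 1
            omega
          rw [hqm, hcast]
        · rw [ctil, if_neg hc1]
          simp
      · rw [hP2, map_sum]
        apply Finset.sum_congr rfl
        intro t _
        rw [evalP_mapDomain_cons, ← hval t]
        have hca : ((a + t : ℕ) : ℤ) = (a:ℤ) + (t:ℤ) := by push_cast; ring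
        rw [hca]
    · -- closure
      intro ν
      rw [Finsupp.sub_apply]
      apply sub_mem
      · rw [hP1, Finsupp.finset_sum_apply]
        apply sum_mem
        intro i'' _
        rw [Finsupp.single_apply]
        split
        · simp only [hcoef, ctil]
          split
          · next hcond => exact AddSubgroup.subset_closure ⟨_, by omega, rfl⟩
          · exact zero_mem _
        · exact zero_mem _
      · rw [hP2, Finsupp.finset_sum_apply]
        apply sum_mem
        intro t _
        rw [Finsupp.mapDomain, Finsupp.sum_apply, Finsupp.sum]
        apply sum_mem
        intro ν' _
        rw [Finsupp.single_apply]
        split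
        · exact hclo t ν'
        · exact zero_mem _
    · -- diagonal
      intro hu hne
      subst hu
      rw [Finsupp.sub_apply]
      cases d with
      | nil =>
        have hP2z : P2 (↑(a :: ([] : List ℕ)) : Multiset ℕ) = 0 := by
          rw [hP2]
          simp
        rw [hP2z, sub_zero, hP1, Finsupp.finset_sum_apply]
        have hset : (Finset.Icc (1 : Fin (List.length ([] : List ℕ)) → ℕ)
            (fun j => List.get [] j)) = {1} := by
          apply Finset.eq_singleton_iff_unique_mem.mpr
          constructor
          · rw [Finset.mem_Icc]
            exact ⟨le_refl _, fun j => j.elim0⟩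
          · intro x _
            funext j
            exact j.elim0
        rw [hset, Finset.sum_singleton, Finsupp.single_apply]
        rw [if_pos]
        · simp only [hcoef, ctil]
          rw [if_pos (by simp; omega)]
          simp
        · simp only [hmon]
          simp
      | cons b d₂ =>
        have hdne : (b :: d₂) ≠ [] := List.cons_ne_nil _ _
        have hb : 0 < b := hdpos b List.mem_cons_self
        have hP1z : P1 (↑(a :: b :: d₂) : Multiset ℕ) = 0 := by
          rw [hP1, Finsupp.finset_sum_apply]
          apply Finset.sum_eq_zero
          intro i'' hi''
          rw [Finset.mem_Icc] at hi''
          have hneq : mon i'' ≠ (↑(a :: b :: d₂) : Multiset ℕ) := by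
            intro habs
            have hSg : 1 ≤ ∑ j, i'' j := by
              set j0 : Fin (b :: d₂).length := ⟨0, by simp⟩ with hj0
              have h2 := Finset.single_le_sum (f := i'') (fun j _ => Nat.zero_le _)
                (Finset.mem_univ j0)
              have h1 : (1:ℕ) ≤ i'' j0 := by simpa using hi''.1 j0
              omega
            have hmem : (a + (∑ j, i'' j) - 0) ∈ (↑(a :: b :: d₂) : Multiset ℕ) := by
              rw [← habs]
              simp only [hmon]
              exact Multiset.mem_cons_self _ _
            rw [show (↑(a :: b :: d₂) : Multiset ℕ) = a ::ₘ ↑(b :: d₂) from rfl] at hmem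
            have hle' : a + (∑ j, i'' j) - 0 ≤ a := by
              rcases Multiset.mem_cons.mp hmem with h' | h'
              · omega
              · have := hadom _ (Multiset.mem_coe.mp h')
                omega
            omega
          rw [Finsupp.single_apply, if_neg hneq]
        rw [hP1z, zero_sub]
        have ht0 : P2 (↑(a :: b :: d₂) : Multiset ℕ) = P'' 0 ↑(b :: d₂) := by
          rw [hP2, Finsupp.finset_sum_apply]
          rw [Finset.sum_eq_single_of_mem 0 (Finset.mem_range.mpr (by
            simp only [List.sum_cons]; omega))]
          · have hinj : Function.Injective (fun ν : Multiset ℕ => (a + 0) ::ₘ ν) :=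
              fun x y hxy => (Multiset.cons_inj_right _).mp hxy
            have hrw : (↑(a :: b :: d₂) : Multiset ℕ)
                = (fun ν : Multiset ℕ => (a + 0) ::ₘ ν) ↑(b :: d₂) := by simp
            rw [hrw, Finsupp.mapDomain_apply hinj]
          · intro t _ htne
            apply Finsupp.mapDomain_notin_range
            rintro ⟨ν', habs⟩
            have hmt : (a + t) ∈ (↑(a :: b :: d₂) : Multiset ℕ) := by
              rw [← habs]
              exact Multiset.mem_cons_self _ _
            rw [show (↑(a :: b :: d₂) : Multiset ℕ) = a ::ₘ ↑(b :: d₂) from rfl] at hmt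
            rcases Multiset.mem_cons.mp hmt with h' | h'
            · omega
            · have := hadom _ (Multiset.mem_coe.mp h')
              omega
        rw [ht0, hdiag 0 (by omega) hdne]
        rw [List.getLast_cons hdne]
        have hlen : (a :: b :: d₂).length - 1 = ((b :: d₂).length - 1) + 1 := by
          simp [List.length_cons]
        rw [hlen, pow_succ]
        ring

end Main
end GNIproof

/-- **Generalized Newton identity** (Theorem 3.1).  If `Σ_{i=1}^n R_i q_{n-i} = c_n q_n`
for all `n ≥ 1`, then for every partition `λ` of length `s ≥ 1`,
`T.q_λ = Σ_{μ ⊢ |λ|, μ ≥ λ} c_{λμ} q_μ` with each `c_{λμ}` in the additive subgroup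
generated by the `c_k` (`k ≥ 1`) and `c_{λλ} = (-1)^{s-1} c_{λ_s}`. -/
theorem generalized_newton_identity
    (F A : Type*) [Field F] [CommRing A] [Algebra F A]
    (q : ℤ → A) (R : ℕ → A) (c : ℕ → F)
    (hq0 : q 0 = 1) (hqneg : ∀ n : ℤ, n < 0 → q n = 0)
    (hc0 : c 0 = 0)
    (hrec : ∀ n : ℕ, 1 ≤ n →
      ∑ i ∈ Finset.Icc 1 n, R i * q ((n : ℤ) - i) = c n • q (n : ℤ))
    (l : List ℕ) (hl : IsPartitionList l) (hne : l ≠ []) :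
    ∃ C : List ℕ → F,
      (∀ μ ∈ partitionsOfWeight l.sum, ¬ Dominates μ l → C μ = 0) ∧
      Tq R q l = ∑ μ ∈ partitionsOfWeight l.sum, C μ • qProd q μ ∧
      (∀ μ ∈ partitionsOfWeight l.sum,
        C μ ∈ AddSubgroup.closure {x : F | ∃ k : ℕ, 1 ≤ k ∧ x = c k}) ∧
      C l = (-1 : F) ^ (l.length - 1) * c (l.getLast hne) := by
  obtain ⟨hsort, hpos⟩ := hl
  obtain ⟨P, hgood, hval, hclo, hdiag⟩ :=
    GNIproof.key q R c hqneg hrec hq0 l hpos hsort 0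
  have hsorted : ∀ μl ∈ partitionsOfWeight l.sum, μl.Pairwise (· ≥ ·) := by
    intro μl hμl
    obtain ⟨p, _, rfl⟩ := Finset.mem_image.mp hμl
    exact Multiset.pairwise_sort _ _
  refine ⟨fun μl => P ↑μl, ?_, ?_, fun μl _ => hclo ↑μl, hdiag rfl hne⟩
  · -- vanishing off the dominance set
    intro μl hμl hndom
    by_contra hC
    obtain ⟨_, _, htake⟩ := hgood ↑μl hC
    refine hndom ?_
    intro i
    obtain ⟨ξ, hξle, hξc, hξs⟩ := htake i
    have := GNIproof.sum_le_sorted_take (hsorted μl hμl) i ξ hξle hξc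
    omega
  · -- the expansion of Tq
    show Tq R q l = ∑ μ ∈ partitionsOfWeight l.sum, P ↑μ • qProd q μ
    have hTV : Tq R q l = GNIproof.Vsum q R 0 l := by
      rw [Tq, GNIproof.Vsum]
      rw [Finset.filter_true_of_mem]
      · apply Finset.sum_congr rfl
        intro i _
        rw [Nat.sub_zero]
      · intro i hi
        rw [Finset.mem_Icc] at hi
        have hlne : l.length ≠ 0 := fun h => hne (List.length_eq_zero_iff.mp h)
        set j0 : Fin l.length := ⟨0, by omega⟩ with hj0
        have h2 := Finset.single_le_sum (f := i) (fun j _ => Nat.zero_le _)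
          (Finset.mem_univ j0)
        have h1 : (1:ℕ) ≤ i j0 := by simpa using hi.1 j0
        omega
    have heval : GNIproof.evalP q P = ∑ ν ∈ P.support, P ν • GNIproof.qM q ν := by
      rw [GNIproof.evalP, Finsupp.lsum_apply]
      rfl
    have hsupp : P.support ⊆
        (partitionsOfWeight l.sum).image (fun μl : List ℕ => (μl : Multiset ℕ)) := by
      intro ν hν
      obtain ⟨hp, hs, _⟩ := hgood ν (Finsupp.mem_support_iff.mp hν)
      refine Finset.mem_image.mpr ⟨sortDesc ν, ?_, Multiset.sort_eq _ _⟩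
      exact Finset.mem_image.mpr
        ⟨⟨ν, fun {x} hx => hp x hx, by omega⟩, Finset.mem_univ _, rfl⟩
    have hqq : ∀ μl : List ℕ, GNIproof.qM q (μl : Multiset ℕ) = qProd q μl := by
      intro μl
      simp only [GNIproof.qM, qProd, Multiset.map_coe, Multiset.prod_coe]
      induction μl with
      | nil => rfl
      | cons x xs ihx =>
        rw [show (((x :: xs : List ℕ)) : List ℤ) = (x : ℤ) :: (xs : List ℤ) from rfl]
        simp only [List.map_cons, List.prod_cons]
        rw [ihx]
    have hinj : ∀ x ∈ partitionsOfWeight l.sum, ∀ y ∈ partitionsOfWeight l.sum,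
        (x : Multiset ℕ) = (y : Multiset ℕ) → x = y := by
      intro x hx y hy hxy
      exact List.Perm.eq_of_pairwise (fun a b _ _ h1 h2 => le_antisymm h2 h1) (hsorted x hx) (hsorted y hy) (Multiset.coe_eq_coe.mp hxy)
    have h2 : ∑ μ ∈ partitionsOfWeight l.sum, P ↑μ • qProd q μ
        = ∑ ν ∈ (partitionsOfWeight l.sum).image (fun μl : List ℕ => (μl : Multiset ℕ)),
            P ν • GNIproof.qM q ν := by
      rw [Finset.sum_image hinj]
      apply Finset.sum_congr rfl
      intro μl _
      rw [hqq]
    rw [hTV, hval, heval, h2]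
    exact Finset.sum_subset hsupp (fun ν _ hν => by
      rw [Finsupp.notMem_support_iff.mp hν, zero_smul])
end

section
/- Let a ≥ 1 be an integer and let (λ_1,…,λ_s,a+1) be a partition. Then T.q_{(λ_1,…,λ_s,a+1)} = T.q_{μ} + q_a·T.q_{ν} − q_{λ_s}·T.q_{(λ_1,…,λ_{s−1},a+1)}, where μ = [λ_1,…,λ_{s−1},λ_s+1,a] is the weakly decreasing rearrangement of (λ_1,…,λ_{s−1},λ_s+1,a) and ν = [λ_1,…,λ_{s−1},λ_s+1] that of (λ_1,…,λ_{s−1},λ_s+1). -/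
open Finset

lemma Tq_nil {A : Type*} [CommRing A] (R : ℕ → A) (q : ℤ → A) : Tq R q [] = R 0 := by
  rw [Tq]
  rw [show (fun j => (([]:List ℕ).get j : ℕ)) = (1 : Fin 0 → ℕ) from funext fun j => j.elim0]
  simp

lemma sum_Icc_pi_succ {M : Type*} [AddCommMonoid M] (n : ℕ) (g : Fin (n+1) → ℕ)
    (f : (Fin (n+1) → ℕ) → M) :
    ∑ i ∈ Finset.Icc 1 g, f i =
      ∑ i₀ ∈ Finset.Icc 1 (g 0), ∑ i ∈ Finset.Icc 1 (fun j => g j.succ), f (Fin.cons i₀ i) := by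
  rw [← Finset.sum_product']
  refine (Finset.sum_nbij' (i := fun p => Fin.cons p.1 p.2)
    (j := fun f => (f 0, fun j => f j.succ)) ?_ ?_ ?_ ?_ ?_).symm
  · intro p hp
    simp only [Finset.mem_product, Finset.mem_Icc, Pi.le_def] at hp
    simp only [Finset.mem_Icc, Pi.le_def]
    refine ⟨fun j => ?_, fun j => ?_⟩ <;> refine Fin.cases ?_ ?_ j
    · exact hp.1.1
    · exact hp.2.1
    · exact hp.1.2
    · exact hp.2.2
  · intro f hf
    simp only [Finset.mem_Icc, Pi.le_def] at hf
    simp only [Finset.mem_product, Finset.mem_Icc, Pi.le_def]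
    exact ⟨⟨hf.1 0, hf.2 0⟩, fun j => hf.1 j.succ, fun j => hf.2 j.succ⟩
  · intro p hp
    simp
  · intro f hf
    exact funext fun j => Fin.cases rfl (fun j => rfl) j
  · intro p hp; rfl

lemma Tq_cons {A : Type*} [CommRing A] (R : ℕ → A) (q : ℤ → A) (n : ℕ) (l : List ℕ) :
    Tq R q (n :: l) = ∑ i ∈ Finset.Icc 1 n,
      q ((n : ℤ) - i) * Tq (fun m => R (m + i)) q l := by
  rw [Tq]
  refine (sum_Icc_pi_succ l.length (fun j => (n :: l).get j)
    (fun i => R (∑ j, i j) * ∏ j, q (((n :: l).get j : ℤ) - i j))).trans ?_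
  refine Finset.sum_congr rfl fun i₀ _ => ?_
  rw [Tq, Finset.mul_sum]
  refine Finset.sum_congr rfl fun i _ => ?_
  simp only [List.length_cons, Fin.sum_univ_succ, Fin.prod_univ_succ, Fin.cons_zero,
    Fin.cons_succ, List.get, List.get_eq_getElem, Fin.val_zero, Fin.val_succ,
    List.getElem_cons_zero, List.getElem_cons_succ]
  rw [add_comm i₀ (∑ j : Fin l.length, i j)]
  ring

section
variable {A : Type*} [CommRing A] (q : ℤ → A)

lemma Tq_perm {l₁ l₂ : List ℕ} (h : l₁.Perm l₂) :
    ∀ R : ℕ → A, Tq R q l₁ = Tq R q l₂ := by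
  induction h with
  | nil => intro R; rfl
  | cons x _ ih =>
      intro R
      rw [Tq_cons, Tq_cons]
      exact Finset.sum_congr rfl fun i _ => by rw [ih]
  | swap x y l =>
      intro R
      rw [Tq_cons, Tq_cons]
      simp_rw [Tq_cons, Finset.mul_sum]
      rw [Finset.sum_comm]
      refine Finset.sum_congr rfl fun i _ => Finset.sum_congr rfl fun j _ => ?_
      have : (fun m => R (m + i + j)) = (fun m => R (m + j + i)) := by
        funext m; congr 1; omega
      rw [this]; ring
  | trans _ _ ih1 ih2 => intro R; rw [ih1, ih2]

lemma key (G : ℕ → A) (a b : ℕ) :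
    ∑ i ∈ Icc 1 b, ∑ j ∈ Icc 1 (a+1), q ((b:ℤ) - i) * q ((a:ℤ) + 1 - j) * G (i+j)
    = (∑ i ∈ Icc 1 (b+1), ∑ j ∈ Icc 1 a, q ((b:ℤ) + 1 - i) * q ((a:ℤ) - j) * G (i+j))
      + q (a:ℤ) * ∑ i ∈ Icc 1 (b+1), q ((b:ℤ) + 1 - i) * G i
      - q (b:ℤ) * ∑ j ∈ Icc 1 (a+1), q ((a:ℤ) + 1 - j) * G j := by
  have h1 : ∀ (n : ℕ) (f : ℕ → A), ∑ i ∈ Icc 1 n, f i = ∑ i ∈ Finset.range n, f (i+1) := by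
    intro n f
    rw [← Finset.Ico_add_one_right_eq_Icc, Finset.sum_Ico_eq_sum_range]
    simp [add_comm]
  set S1 : A := ∑ i ∈ Finset.range b, q ((b:ℤ) - 1 - i) * G (i+2) with hS1
  set S2 : A := ∑ j ∈ Finset.range a, q ((a:ℤ) - 1 - j) * G (j+2) with hS2
  set D : A := ∑ i ∈ Finset.range b, ∑ j ∈ Finset.range a,
      q ((b:ℤ) - 1 - i) * q ((a:ℤ) - 1 - j) * G (i+j+3) with hD
  have hA : ∑ i ∈ Icc 1 b, ∑ j ∈ Icc 1 (a+1), q ((b:ℤ) - i) * q ((a:ℤ) + 1 - j) * G (i+j)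
      = D + q (a:ℤ) * S1 := by
    rw [h1]
    simp_rw [h1]
    rw [hD, hS1, Finset.mul_sum, ← Finset.sum_add_distrib]
    refine Finset.sum_congr rfl fun i _ => ?_
    rw [Finset.sum_range_succ']
    congr 1
    · refine Finset.sum_congr rfl fun j _ => ?_
      have e1 : (b:ℤ) - (i+1 : ℕ) = (b:ℤ) - 1 - i := by push_cast; ring
      have e2 : (a:ℤ) + 1 - ((j+1)+1 : ℕ) = (a:ℤ) - 1 - j := by push_cast; ring
      have e3 : (i+1) + ((j+1)+1) = i+j+3 := by omega
      rw [e1, e2, e3]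
    · have e1 : (b:ℤ) - (i+1 : ℕ) = (b:ℤ) - 1 - i := by push_cast; ring
      have e2 : (a:ℤ) + 1 - ((0:ℕ)+1 : ℕ) = (a:ℤ) := by push_cast; ring
      have e3 : (i+1) + (0+1) = i+2 := by omega
      rw [e1, e2, e3]; ring
  have hB : ∑ i ∈ Icc 1 (b+1), ∑ j ∈ Icc 1 a, q ((b:ℤ) + 1 - i) * q ((a:ℤ) - j) * G (i+j)
      = D + q (b:ℤ) * S2 := by
    rw [h1]
    simp_rw [h1]
    rw [Finset.sum_range_succ', hD, hS2, Finset.mul_sum]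
    congr 1
    · refine Finset.sum_congr rfl fun i _ => Finset.sum_congr rfl fun j _ => ?_
      have e1 : (b:ℤ) + 1 - ((i+1)+1 : ℕ) = (b:ℤ) - 1 - i := by push_cast; ring
      have e2 : (a:ℤ) - (j+1 : ℕ) = (a:ℤ) - 1 - j := by push_cast; ring
      have e3 : ((i+1)+1) + (j+1) = i+j+3 := by omega
      rw [e1, e2, e3]
    · refine Finset.sum_congr rfl fun j _ => ?_
      have e1 : (b:ℤ) + 1 - ((0:ℕ)+1 : ℕ) = (b:ℤ) := by push_cast; ring
      have e2 : (a:ℤ) - (j+1 : ℕ) = (a:ℤ) - 1 - j := by push_cast; ring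
      have e3 : (0+1) + (j+1) = j+2 := by omega
      rw [e1, e2, e3]; ring
  have hC : ∑ i ∈ Icc 1 (b+1), q ((b:ℤ) + 1 - i) * G i = S1 + q (b:ℤ) * G 1 := by
    rw [h1, Finset.sum_range_succ', hS1]
    congr 1
    · refine Finset.sum_congr rfl fun i _ => ?_
      have e1 : (b:ℤ) + 1 - ((i+1)+1 : ℕ) = (b:ℤ) - 1 - i := by push_cast; ring
      have e3 : (i+1)+1 = i+2 := by omega
      rw [e1, e3]
    · have e1 : (b:ℤ) + 1 - ((0:ℕ)+1 : ℕ) = (b:ℤ) := by push_cast; ring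
      rw [e1]
  have hDd : ∑ j ∈ Icc 1 (a+1), q ((a:ℤ) + 1 - j) * G j = S2 + q (a:ℤ) * G 1 := by
    rw [h1, Finset.sum_range_succ', hS2]
    congr 1
    · refine Finset.sum_congr rfl fun j _ => ?_
      have e1 : (a:ℤ) + 1 - ((j+1)+1 : ℕ) = (a:ℤ) - 1 - j := by push_cast; ring
      have e3 : (j+1)+1 = j+2 := by omega
      rw [e1, e3]
    · have e1 : (a:ℤ) + 1 - ((0:ℕ)+1 : ℕ) = (a:ℤ) := by push_cast; ring
      rw [e1]
  rw [hA, hB, hC, hDd]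
  ring
end

/-- **Lemma 3.4, second iteration formula.**  For `a ≥ 1` and a partition
`(λ₁,…,λ_s,a+1)`:
`T.q_{(λ₁,…,λ_s,a+1)} = T.q_{[λ₁,…,λ_{s-1},λ_s+1,a]} + q_a·T.q_{[λ₁,…,λ_{s-1},λ_s+1]}
 - q_{λ_s}·T.q_{(λ₁,…,λ_{s-1},a+1)}`. -/
theorem iteration_formula_general
    (F A : Type*) [Field F] [CommRing A] [Algebra F A]
    (q : ℤ → A) (R : ℕ → A)
    (hq0 : q 0 = 1) (hqneg : ∀ n : ℤ, n < 0 → q n = 0)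
    (a : ℕ) (ha : 1 ≤ a)
    (l : List ℕ) (hl : IsPartitionList l) (hne : l ≠ [])
    (hlast : a + 1 ≤ l.getLast hne) :
    Tq R q (l ++ [a + 1]) =
      Tq R q (sortDesc (↑(l.dropLast ++ [l.getLast hne + 1, a])))
        + q (a : ℤ) * Tq R q (sortDesc (↑(l.dropLast ++ [l.getLast hne + 1])))
        - q (l.getLast hne) * Tq R q (l.dropLast ++ [a + 1]) := by
  have hs : ∀ L : List ℕ, (sortDesc (↑L : Multiset ℕ)).Perm L := fun L =>
    Multiset.coe_eq_coe.mp (by rw [sortDesc]; exact Multiset.sort_eq _ _)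
  set lam := l.dropLast with hlam
  set b := l.getLast hne with hb
  have hsplit : lam ++ [b] = l := List.dropLast_append_getLast hne
  have p1 : (l ++ [a+1]).Perm (b :: (a+1) :: lam) := by
    rw [← hsplit, List.append_assoc]
    exact List.perm_append_comm
  have p2 : (sortDesc (↑(lam ++ [b+1, a]) : Multiset ℕ)).Perm ((b+1) :: a :: lam) :=
    (hs _).trans List.perm_append_comm
  have p3 : (sortDesc (↑(lam ++ [b+1]) : Multiset ℕ)).Perm ((b+1) :: lam) :=
    (hs _).trans List.perm_append_comm
  have p4 : (lam ++ [a+1]).Perm ((a+1) :: lam) := List.perm_append_comm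
  rw [Tq_perm q p1 R, Tq_perm q p2 R, Tq_perm q p3 R, Tq_perm q p4 R]
  have hL : Tq R q (b :: (a+1) :: lam) =
      ∑ i ∈ Icc 1 b, ∑ j ∈ Icc 1 (a+1),
        q ((b:ℤ) - i) * q ((a:ℤ) + 1 - j) * Tq (fun m => R (m + (i+j))) q lam := by
    rw [Tq_cons]
    simp_rw [Tq_cons, Finset.mul_sum]
    refine Finset.sum_congr rfl fun i _ => Finset.sum_congr rfl fun j _ => ?_
    have h1 : (fun m => R (m + j + i)) = (fun m => R (m + (i+j))) :=
      funext fun m => congrArg R (by omega)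
    rw [h1]; push_cast; ring
  have hM : Tq R q ((b+1) :: a :: lam) =
      ∑ i ∈ Icc 1 (b+1), ∑ j ∈ Icc 1 a,
        q ((b:ℤ) + 1 - i) * q ((a:ℤ) - j) * Tq (fun m => R (m + (i+j))) q lam := by
    rw [Tq_cons]
    simp_rw [Tq_cons, Finset.mul_sum]
    refine Finset.sum_congr rfl fun i _ => Finset.sum_congr rfl fun j _ => ?_
    have h1 : (fun m => R (m + j + i)) = (fun m => R (m + (i+j))) :=
      funext fun m => congrArg R (by omega)
    rw [h1]; push_cast; ring
  have hN : Tq R q ((b+1) :: lam) =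
      ∑ i ∈ Icc 1 (b+1), q ((b:ℤ) + 1 - i) * Tq (fun m => R (m + i)) q lam := by
    rw [Tq_cons]
    refine Finset.sum_congr rfl fun i _ => ?_
    push_cast; ring
  have hO : Tq R q ((a+1) :: lam) =
      ∑ j ∈ Icc 1 (a+1), q ((a:ℤ) + 1 - j) * Tq (fun m => R (m + j)) q lam := by
    rw [Tq_cons]
    refine Finset.sum_congr rfl fun j _ => ?_
    push_cast; ring
  rw [hL, hM, hN, hO]
  exact key q (fun k => Tq (fun m => R (m + k)) q lam) a b
end

section
/- Assume c : ℕ → F satisfies c_0 = 0 and that Σ_{i=1}^n R_i q_{n−i} = c_n q_n holds in A for every n ≥ 1. Then for all integers m ≥ n ≥ 1, T.q_{(m,n)} = Σ_{i=m+1}^{m+n} (c_i − c_{m+n−i}) q_i q_{m+n−i} − c_n q_m q_n. -/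
open Finset

/-- `T.q_{(m,n)} = Σ_{i₁,i₂ ≥ 1} R_{i₁+i₂} q_{m-i₁} q_{n-i₂}`, a finite sum since `q`
vanishes on negative integers. -/
def TqTwoRow {A : Type*} [CommRing A] (R : ℕ → A) (q : ℤ → A) (m n : ℕ) : A :=
  ∑ i₁ ∈ Finset.Icc 1 m, ∑ i₂ ∈ Finset.Icc 1 n,
    R (i₁ + i₂) * (q ((m : ℤ) - i₁) * q ((n : ℤ) - i₂))

/-- **Lemma 3.9 (two-row action).**  If `Σ_{i=1}^k R_i q_{k-i} = c_k q_k` for all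
`k ≥ 1` and `c_0 = 0`, then for `m ≥ n ≥ 1`,
`T.q_{(m,n)} = Σ_{i=m+1}^{m+n} (c_i - c_{m+n-i}) q_i q_{m+n-i} - c_n q_m q_n`. -/
theorem two_row_action
    (F A : Type*) [Field F] [CommRing A] [Algebra F A]
    (q : ℤ → A) (R : ℕ → A) (c : ℕ → F)
    (hq0 : q 0 = 1) (hqneg : ∀ k : ℤ, k < 0 → q k = 0)
    (hc0 : c 0 = 0)
    (hrec : ∀ k : ℕ, 1 ≤ k →
      ∑ i ∈ Finset.Icc 1 k, R i * q ((k : ℤ) - i) = c k • q (k : ℤ))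
    (m n : ℕ) (hmn : n ≤ m) (hn : 1 ≤ n) :
    TqTwoRow R q m n =
      (∑ i ∈ Finset.Icc (m + 1) (m + n),
        (c i - c (m + n - i)) • (q (i : ℤ) * q ((m + n - i : ℕ) : ℤ)))
        - c n • (q (m : ℤ) * q (n : ℤ)) := by
  classical
  have hIcc : ∀ k : ℕ, Icc 1 k = Ioc 0 k := fun k => Finset.Icc_add_one_left_eq_Ioc 0 k
  -- Step 1: inner sum identity
  have key : ∀ i₂ ∈ Icc 1 n,
      (∑ i₁ ∈ Icc 1 m, R (i₁ + i₂) * q ((m:ℤ) - i₁))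
        = c (m + i₂) • q ((m:ℤ) + i₂)
          - ∑ j ∈ Icc 1 i₂, R j * q ((m:ℤ) + i₂ - j) := by
    intro i₂ hi₂
    rw [mem_Icc] at hi₂
    have hr := hrec (m + i₂) (by omega)
    have e1 : ((m + i₂ : ℕ) : ℤ) = (m:ℤ) + i₂ := by push_cast; ring
    rw [e1] at hr
    have hsplit : (∑ j ∈ Ioc 0 i₂, R j * q ((m:ℤ) + i₂ - j))
        + ∑ j ∈ Ioc i₂ (m+i₂), R j * q ((m:ℤ) + i₂ - j)
        = ∑ j ∈ Ioc 0 (m+i₂), R j * q ((m:ℤ) + i₂ - j) :=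
      Finset.sum_Ioc_consecutive _ (by omega) (by omega)
    have hshift : ∑ j ∈ Ioc i₂ (m+i₂), R j * q ((m:ℤ) + i₂ - j)
        = ∑ i₁ ∈ Ioc 0 m, R (i₁ + i₂) * q ((m:ℤ) - i₁) := by
      have : Ioc i₂ (m+i₂) = (Ioc 0 m).map (addRightEmbedding i₂) := by
        rw [Finset.map_add_right_Ioc]; congr 1; omega
      rw [this, Finset.sum_map]
      refine Finset.sum_congr rfl fun i₁ _ => ?_
      simp only [addRightEmbedding_apply]
      congr 1
      push_cast; ring
    rw [hIcc i₂, hIcc m, hIcc (m+i₂)] at *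
    rw [← hshift]
    rw [← hsplit] at hr
    linear_combination hr
  -- rewrite TqTwoRow with outer sum over i₂
  have hT : TqTwoRow R q m n
      = ∑ i₂ ∈ Icc 1 n, (∑ i₁ ∈ Icc 1 m, R (i₁ + i₂) * q ((m:ℤ) - i₁)) * q ((n:ℤ) - i₂) := by
    rw [TqTwoRow, Finset.sum_comm]
    refine Finset.sum_congr rfl fun i₂ _ => ?_
    rw [Finset.sum_mul]
    exact Finset.sum_congr rfl fun i₁ _ => by ring
  have hT2 : ∑ i₂ ∈ Icc 1 n, (∑ i₁ ∈ Icc 1 m, R (i₁ + i₂) * q ((m:ℤ) - i₁)) * q ((n:ℤ) - i₂)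
      = ∑ i₂ ∈ Icc 1 n, (c (m + i₂) • q ((m:ℤ) + i₂)
          - ∑ j ∈ Icc 1 i₂, R j * q ((m:ℤ) + i₂ - j)) * q ((n:ℤ) - i₂) :=
    Finset.sum_congr rfl fun i₂ hi₂ => by rw [key i₂ hi₂]
  rw [hT, hT2]
  simp only [sub_mul, smul_mul_assoc]
  rw [Finset.sum_sub_distrib]
  -- A part
  have hA : ∑ i₂ ∈ Icc 1 n, c (m + i₂) • (q ((m:ℤ) + i₂) * q ((n:ℤ) - i₂))
      = ∑ i ∈ Icc (m+1) (m+n), c i • (q (i:ℤ) * q ((m + n - i : ℕ) : ℤ)) := by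
    have : Icc (m+1) (m+n) = (Icc 1 n).map (addLeftEmbedding m) := by
      rw [Finset.map_add_left_Icc]
    rw [this, Finset.sum_map]
    refine Finset.sum_congr rfl fun i₂ hi₂ => ?_
    rw [mem_Icc] at hi₂
    simp only [addLeftEmbedding_apply]
    have e1 : (m:ℤ) + i₂ = ((m + i₂ : ℕ) : ℤ) := by push_cast; ring
    have e2 : (n:ℤ) - i₂ = ((m + n - (m + i₂) : ℕ) : ℤ) := by
      have := hi₂.2; omega
    rw [e1, e2]
  -- D part: first swap, then shift, then swap back, then apply hrec
  have hD : ∑ i₂ ∈ Icc 1 n, ∑ j ∈ Icc 1 i₂, R j * q ((m:ℤ) + i₂ - j) * q ((n:ℤ) - i₂)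
      = ∑ t ∈ Icc 0 n, c (n - t) • (q ((m:ℤ) + t) * q ((n:ℤ) - t)) := by
    rw [Finset.sum_comm' (t' := Icc 1 n) (s' := fun j => Icc j n)
      (fun i₂ j => by simp only [mem_Icc]; omega)]
    have hshift2 : ∀ j ∈ Icc 1 n,
        ∑ i₂ ∈ Icc j n, R j * q ((m:ℤ) + i₂ - j) * q ((n:ℤ) - i₂)
        = ∑ t ∈ Icc 0 (n - j), R j * q ((m:ℤ) + t) * q ((n:ℤ) - j - t) := by
      intro j hj
      rw [mem_Icc] at hj
      have : Icc j n = (Icc 0 (n - j)).map (addLeftEmbedding j) := by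
        rw [Finset.map_add_left_Icc]; congr 1 <;> omega
      rw [this, Finset.sum_map]
      refine Finset.sum_congr rfl fun t _ => ?_
      simp only [addLeftEmbedding_apply]
      have e1 : (m:ℤ) + ((j + t : ℕ):ℤ) - j = (m:ℤ) + t := by push_cast; ring
      have e2 : (n:ℤ) - ((j + t : ℕ):ℤ) = (n:ℤ) - j - t := by push_cast; ring
      rw [e1, e2]
    rw [Finset.sum_congr rfl hshift2]
    rw [Finset.sum_comm' (t' := Icc 0 n) (s' := fun t => Icc 1 (n - t))
      (fun j t => by simp only [mem_Icc]; omega)]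
    refine Finset.sum_congr rfl fun t ht => ?_
    rw [mem_Icc] at ht
    have hfac : ∑ j ∈ Icc 1 (n - t), R j * q ((m:ℤ) + t) * q ((n:ℤ) - j - t)
        = (∑ j ∈ Icc 1 (n - t), R j * q (((n - t : ℕ):ℤ) - j)) * q ((m:ℤ) + t) := by
      rw [Finset.sum_mul]
      refine Finset.sum_congr rfl fun j _ => ?_
      have e : (n:ℤ) - j - t = ((n - t : ℕ):ℤ) - j := by
        have := ht.2; omega
      rw [e]; ring
    rw [hfac]
    rcases Nat.lt_or_ge t n with h | h
    · rw [hrec (n - t) (by omega)]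
      have e : (((n - t : ℕ)):ℤ) = (n:ℤ) - t := by
        have := ht.2; omega
      rw [e, smul_mul_assoc, mul_comm (q ((n:ℤ) - t))]
    · have htn : t = n := by omega
      subst htn
      simp [hc0]
  have hD' : ∑ x ∈ Icc 1 n, (∑ j ∈ Icc 1 x, R j * q ((m:ℤ) + x - j)) * q ((n:ℤ) - x)
      = ∑ i₂ ∈ Icc 1 n, ∑ j ∈ Icc 1 i₂, R j * q ((m:ℤ) + i₂ - j) * q ((n:ℤ) - i₂) :=
    Finset.sum_congr rfl fun x _ => by rw [Finset.sum_mul]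
  rw [hA, hD', hD]
  -- split off t = 0 of the D sum and reindex the rest
  have h0 : (0:ℕ) ∉ Icc 1 n := by simp
  have hsplit0 : Icc 0 n = insert 0 (Icc 1 n) := by
    ext x; simp [mem_Icc, mem_insert]; omega
  rw [hsplit0, Finset.sum_insert h0]
  have hB : ∑ t ∈ Icc 1 n, c (n - t) • (q ((m:ℤ) + t) * q ((n:ℤ) - t))
      = ∑ i ∈ Icc (m+1) (m+n), c (m + n - i) • (q (i:ℤ) * q ((m + n - i : ℕ) : ℤ)) := by
    have : Icc (m+1) (m+n) = (Icc 1 n).map (addLeftEmbedding m) := by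
      rw [Finset.map_add_left_Icc]
    rw [this, Finset.sum_map]
    refine Finset.sum_congr rfl fun t ht => ?_
    rw [mem_Icc] at ht
    simp only [addLeftEmbedding_apply]
    have e2 : m + n - (m + t) = n - t := by omega
    rw [e2]
    have e3 : (m:ℤ) + t = ((m + t : ℕ):ℤ) := by push_cast; ring
    have e4 : (n:ℤ) - t = ((n - t : ℕ):ℤ) := by have := ht.2; omega
    rw [e3, e4]
  rw [hB]
  simp only [Nat.sub_zero, Nat.cast_zero, add_zero, sub_zero]
  have hsub : ∑ i ∈ Icc (m+1) (m+n), (c i - c (m + n - i)) • (q (i:ℤ) * q ((m + n - i : ℕ) : ℤ))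
      = (∑ i ∈ Icc (m+1) (m+n), c i • (q (i:ℤ) * q ((m + n - i : ℕ) : ℤ)))
        - ∑ i ∈ Icc (m+1) (m+n), c (m + n - i) • (q (i:ℤ) * q ((m + n - i : ℕ) : ℤ)) := by
    rw [← Finset.sum_sub_distrib]
    exact Finset.sum_congr rfl fun i _ => sub_smul _ _ _
  rw [hsub]
  ring
end

section
/- Let c be a finitely supported F-valued function on pairs (μ,ν) of partitions (the empty partition allowed) with |μ| = |ν|. If Σ_{(μ,ν)} c_{μν} h_{−μ} h_ν v = 0 for every v ∈ Λ, then c_{μν} = 0 for every pair (μ,ν). -/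
open Finset MvPolynomial

/-- The power sum `p_n`, the `n`-th variable of `Λ = F[p₁,p₂,…]`. -/
noncomputable def pv (F : Type*) [Field F] (n : ℕ) : MvPolynomial ℕ+ F :=
  if h : 0 < n then X ⟨n, h⟩ else 1

/-- `p_μ = p_{μ₁} ⋯ p_{μ_s}`. -/
noncomputable def pMul (F : Type*) [Field F] (m : Multiset ℕ) : MvPolynomial ℕ+ F :=
  (m.map (pv F)).prod

/-- `z_λ = Π_i i^{m_i}·m_i!`. -/
def zMult (m : Multiset ℕ) : ℕ :=
  m.toFinset.prod fun i => i ^ m.count i * (m.count i).factorial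

/-- The generalized complete symmetric function: `q^ε_n = Σ_{λ ⊢ n} z_λ⁻¹ ε_λ⁻¹ p_λ`
for `n ≥ 0` (giving `q^ε_0 = 1`) and `q^ε_n = 0` for `n < 0`. -/
noncomputable def qeps {F : Type*} [Field F] (ε : ℕ → F) (n : ℤ) : MvPolynomial ℕ+ F :=
  if n < 0 then 0 else
    ∑ μ : Nat.Partition n.toNat,
      ((zMult μ.parts : F) * (μ.parts.map ε).prod)⁻¹ • pMul F μ.parts

/-- The weight `Π_i i^{d_i} (d_i)! ε_i^{d_i}` of a monomial, i.e. `z_λ ε_λ` for the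
partition `λ` with multiplicities `d`. -/
noncomputable def wform {F : Type*} [Field F] (ε : ℕ → F) (d : ℕ+ →₀ ℕ) : F :=
  d.prod fun i k => ((i : ℕ) : F) ^ k * (Nat.factorial k : F) * ε (i : ℕ) ^ k

/-- The bilinear form on `Λ` determined by `⟨p_λ, p_μ⟩ = δ_{λμ} z_λ ε_λ`. -/
noncomputable def bform {F : Type*} [Field F] (ε : ℕ → F) (f g : MvPolynomial ℕ+ F) : F :=
  ∑ d ∈ f.support, MvPolynomial.coeff d f * MvPolynomial.coeff d g * wform ε d

/-- The annihilation operator `h_n = n ε_n ∂/∂p_n` (`n ≥ 1`). -/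
noncomputable def hpos {F : Type*} [Field F] (ε : ℕ → F) (n : ℕ) :
    Module.End F (MvPolynomial ℕ+ F) :=
  if h : 0 < n then ((n : F) * ε n) • (pderiv (⟨n, h⟩ : ℕ+)).toLinearMap else 1

/-- `h_ν = h_{ν₁} ⋯ h_{ν_s}` (the `h_n`, `n ≥ 1`, commute with each other, so any
ordering gives the same operator). -/
noncomputable def hMul {F : Type*} [Field F] (ε : ℕ → F) (m : Multiset ℕ) :
    Module.End F (MvPolynomial ℕ+ F) :=
  ((Multiset.sort m (· ≥ ·)).map (hpos ε)).prod

/-- The maximal weight `Σ_i i·d_i` of a monomial occurring in `f`. -/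
def wdeg {F : Type*} [Field F] (f : MvPolynomial ℕ+ F) : ℕ :=
  f.support.sup fun d => d.sum fun i k => (i : ℕ) * k

/-- The operator `X₀ = Σ_{(μ,ν) : |μ|=|ν|} z_μ⁻¹ η_μ z_ν⁻¹ τ_ν h_{-μ} h_ν`; every
term with `|ν| > wdeg f` annihilates `f`, so the sum may be truncated there. -/
noncomputable def X0op {F : Type*} [Field F] (ε η τ : ℕ → F) (f : MvPolynomial ℕ+ F) :
    MvPolynomial ℕ+ F :=
  ∑ N ∈ Finset.range (wdeg f + 1), ∑ μ : Nat.Partition N, ∑ ν : Nat.Partition N,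
    ((zMult μ.parts : F)⁻¹ * (μ.parts.map η).prod *
      (zMult ν.parts : F)⁻¹ * (ν.parts.map τ).prod) •
        (pMul F μ.parts * hMul ε ν.parts f)

/-- `R_0 = 1` and `R_n = Σ_{λ ⊢ n} z_λ⁻¹ η_λ p_λ` for `n ≥ 1`. -/
noncomputable def Rgen {F : Type*} [Field F] (η : ℕ → F) (n : ℕ) : MvPolynomial ℕ+ F :=
  ∑ μ : Nat.Partition n, ((zMult μ.parts : F)⁻¹ * (μ.parts.map η).prod) • pMul F μ.parts

/-- The eigenvalue `e_λ = 1 + (1-a) Σ_{i=1}^{l(λ)} (b^{λ_i}-1) a^{i-1}`. -/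
def eigval {F : Type*} [Field F] (a b : F) (l : List ℕ) : F :=
  1 + (1 - a) * ∑ i : Fin l.length, (b ^ (l.get i) - 1) * a ^ (i : ℕ)

section Aux

variable {F : Type*} [Field F]

/-- The exponent finsupp corresponding to a multiset of (positive) naturals. -/
noncomputable def eOf (m : Multiset ℕ) : ℕ+ →₀ ℕ :=
  (m.filterMap (β := ℕ+) fun n => if h : 0 < n then some (⟨n, h⟩ : ℕ+) else none).toFinsupp

@[simp] lemma eOf_zero : eOf 0 = 0 := by
  simp [eOf]

lemma eOf_cons {n : ℕ} (h : 0 < n) (m : Multiset ℕ) :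
    eOf (n ::ₘ m) = (Finsupp.single (⟨n, h⟩ : ℕ+) 1 : ℕ+ →₀ ℕ) + eOf m := by
  erw [eOf, eOf, Multiset.filterMap_cons_some _ _ _ (by rw [dif_pos h]; rfl),
    ← Multiset.singleton_add, Multiset.toFinsupp_add, Multiset.toFinsupp_singleton]

lemma map_filterMap_pos (m : Multiset ℕ) (hm : ∀ n ∈ m, 0 < n) :
    ((m.filterMap (β := ℕ+) fun n => if h : 0 < n then some (⟨n, h⟩ : ℕ+) else none).map
      (fun i : ℕ+ => (i : ℕ))) = m := by
  induction m using Multiset.induction with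
  | empty => simp
  | cons n m ih =>
    have hn : 0 < n := hm n (Multiset.mem_cons_self _ _)
    erw [Multiset.filterMap_cons_some _ _ _ (by rw [dif_pos hn]; rfl), Multiset.map_cons,
      ih fun k hk => hm k (Multiset.mem_cons_of_mem hk)]
    rfl

lemma eOf_inj {m m' : Multiset ℕ} (hm : ∀ n ∈ m, 0 < n) (hm' : ∀ n ∈ m', 0 < n)
    (h : eOf m = eOf m') : m = m' := by
  have h2 := Multiset.toFinsupp.injective h
  rw [← map_filterMap_pos m hm, ← map_filterMap_pos m' hm', h2]

/-- The weight of an exponent finsupp. -/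
def wtF (d : ℕ+ →₀ ℕ) : ℕ := d.sum fun i k => (i : ℕ) * k

lemma wtF_add (a b : ℕ+ →₀ ℕ) : wtF (a + b) = wtF a + wtF b :=
  Finsupp.sum_add_index' (fun i => mul_zero _) (fun i k l => mul_add _ _ _)

lemma wtF_single (i : ℕ+) (k : ℕ) : wtF (Finsupp.single i k) = (i : ℕ) * k :=
  Finsupp.sum_single_index (mul_zero _)

lemma wtF_eOf (m : Multiset ℕ) (hm : ∀ n ∈ m, 0 < n) : wtF (eOf m) = m.sum := by
  induction m using Multiset.induction with
  | empty => simp [wtF]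
  | cons n m ih =>
    have hn : 0 < n := hm n (Multiset.mem_cons_self _ _)
    rw [eOf_cons hn, wtF_add, wtF_single (⟨n, hn⟩ : ℕ+) 1, Multiset.sum_cons,
      ih fun k hk => hm k (Multiset.mem_cons_of_mem hk), mul_one]
    rfl

lemma wtF_eq_zero {d : ℕ+ →₀ ℕ} (h : wtF d = 0) : d = 0 := by
  ext i
  simp only [Finsupp.coe_zero, Pi.zero_apply]
  by_contra hi
  have hmem : i ∈ d.support := Finsupp.mem_support_iff.mpr hi
  rw [wtF, Finsupp.sum] at h
  have h2 := Finset.sum_eq_zero_iff.mp h i hmem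
  rcases Nat.mul_eq_zero.mp h2 with h3 | h3
  · exact absurd h3 i.2.ne'
  · exact hi h3

lemma wtF_mono {e d : ℕ+ →₀ ℕ} (h : e ≤ d) : wtF e ≤ wtF d := by
  have : d = e + (d - e) := (add_tsub_cancel_of_le h).symm
  rw [this, wtF_add]; omega

lemma eq_of_le_of_wtF_eq {e d : ℕ+ →₀ ℕ} (h : e ≤ d) (hw : wtF e = wtF d) : e = d := by
  have hd : d = e + (d - e) := (add_tsub_cancel_of_le h).symm
  have : wtF (d - e) = 0 := by
    have := congrArg wtF hd
    rw [wtF_add] at this; omega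
  have h0 := wtF_eq_zero this
  rw [hd, h0, add_zero]

lemma pMul_eq_monomial (m : Multiset ℕ) (hm : ∀ n ∈ m, 0 < n) :
    pMul F m = MvPolynomial.monomial (eOf m) (1 : F) := by
  induction m using Multiset.induction with
  | empty => simp [pMul, MvPolynomial.monomial_eq]
  | cons n m ih =>
    have hn : 0 < n := hm n (Multiset.mem_cons_self _ _)
    erw [pMul, Multiset.map_cons, Multiset.prod_cons, ← pMul,
      ih fun k hk => hm k (Multiset.mem_cons_of_mem hk), eOf_cons hn, pv, dif_pos hn,
      MvPolynomial.X.eq_1 (⟨n, hn⟩ : ℕ+), MvPolynomial.monomial_mul, one_mul]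
    rfl

lemma hList_monomial [CharZero F] (ε : ℕ → F) (hε : ∀ k : ℕ, 1 ≤ k → ε k ≠ 0)
    (l : List ℕ) (hl : ∀ n ∈ l, 0 < n) (d : ℕ+ →₀ ℕ) :
    ∃ s : F, ((l.map (hpos ε)).prod) (MvPolynomial.monomial d (1 : F)) =
        s • MvPolynomial.monomial (d - eOf ↑l) (1 : F) ∧
      (eOf ↑l ≤ d → s ≠ 0) ∧ (¬ eOf ↑l ≤ d → s = 0) := by
  induction l with
  | nil =>
    refine ⟨1, by simp, fun _ => one_ne_zero, fun hle => absurd bot_le hle⟩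
  | cons n l ih =>
    have hn : 0 < n := hl n List.mem_cons_self
    obtain ⟨s, hs, hs1, hs2⟩ := ih fun k hk => hl k (List.mem_cons_of_mem _ hk)
    set i : ℕ+ := ⟨n, hn⟩
    set e : ℕ+ →₀ ℕ := eOf ↑l
    have hecons : eOf ↑(n :: l) = Finsupp.single i 1 + e := by
      rw [← Multiset.cons_coe, eOf_cons hn]
    refine ⟨s * ((n : F) * ε n * ((d - e) i : ℕ)), ?_, ?_, ?_⟩
    · have happ : ∀ P : MvPolynomial ℕ+ F, hpos ε n P =
          (((n : ℕ) : F) * ε n) • (pderiv (⟨n, hn⟩ : ℕ+) P) := by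
        intro P
        rw [hpos, dif_pos hn]
        rfl
      rw [List.map_cons, List.prod_cons, Module.End.mul_apply, hs, map_smul, happ,
        hecons]
      rw [show d - (Finsupp.single i 1 + e) = d - e - Finsupp.single i 1 by
        rw [tsub_tsub, add_comm]]
      have hpd : pderiv (⟨n, hn⟩ : ℕ+) (MvPolynomial.monomial (d - e) (1 : F)) =
          MvPolynomial.monomial (d - e - (Finsupp.single (⟨n, hn⟩ : ℕ+) 1 : ℕ+ →₀ ℕ))
            ((1 : F) * ((d - e) ⟨n, hn⟩)) := MvPolynomial.pderiv_monomial
      rw [hpd, one_mul]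
      simp only [smul_smul, MvPolynomial.smul_monomial, smul_eq_mul, mul_one]
      erw [smul_smul]
      exact (MvPolynomial.smul_monomial _).trans
        (congrArg (MvPolynomial.monomial _) (by rw [smul_eq_mul, mul_assoc]))
    · intro hle
      rw [hecons] at hle
      have hle' : e ≤ d := le_trans (self_le_add_left _ _) hle
      have hi := Finsupp.le_def.mp hle i
      rw [Finsupp.add_apply, Finsupp.single_eq_same] at hi
      have hdi : 0 < (d - e) i := by
        rw [Finsupp.tsub_apply]; omega
      have hn0 : (n : F) ≠ 0 := Nat.cast_ne_zero.mpr hn.ne'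
      exact mul_ne_zero (hs1 hle')
        (mul_ne_zero (mul_ne_zero hn0 (hε n hn)) (Nat.cast_ne_zero.mpr hdi.ne'))
    · intro hle
      rw [hecons] at hle
      by_cases he : e ≤ d
      · have hzero : (d - e) i = 0 := by
          rw [Finsupp.tsub_apply]
          by_contra hne
          apply hle
          rw [Finsupp.le_def]
          intro j
          by_cases hji : j = i
          · rw [hji, Finsupp.add_apply, Finsupp.single_eq_same]
            omega
          · rw [Finsupp.add_apply, Finsupp.single_eq_of_ne' fun hh => hji hh.symm, zero_add]
            exact Finsupp.le_def.mp he j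
        rw [hzero, Nat.cast_zero, mul_zero, mul_zero]
      · rw [hs2 he, zero_mul]

lemma hMul_monomial [CharZero F] (ε : ℕ → F) (hε : ∀ k : ℕ, 1 ≤ k → ε k ≠ 0)
    (m : Multiset ℕ) (hm : ∀ n ∈ m, 0 < n) (d : ℕ+ →₀ ℕ) :
    ∃ s : F, hMul ε m (MvPolynomial.monomial d (1 : F)) =
        s • MvPolynomial.monomial (d - eOf m) (1 : F) ∧
      (eOf m ≤ d → s ≠ 0) ∧ (¬ eOf m ≤ d → s = 0) := by
  obtain ⟨s, hs, hs1, hs2⟩ := hList_monomial ε hε (Multiset.sort m (· ≥ ·))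
    (fun n hn => hm n (Multiset.mem_sort _ |>.mp hn)) d
  rw [Multiset.sort_eq] at hs hs1 hs2
  exact ⟨s, hs, hs1, hs2⟩

end Aux

/-- **Lemma 4.1** : if a finitely supported combination
`Σ_{(μ,ν) : |μ|=|ν|} c_{μν} h_{-μ} h_ν` annihilates every `v ∈ Λ`, then all `c_{μν} = 0`. -/
theorem operator_combination_zero
    (F : Type*) [Field F] [CharZero F] (ε : ℕ → F) (hε : ∀ k : ℕ, 1 ≤ k → ε k ≠ 0)
    (c : ((N : ℕ) × (Nat.Partition N × Nat.Partition N)) →₀ F)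
    (h : ∀ v : MvPolynomial ℕ+ F,
      ∑ x ∈ c.support, c x • (pMul F x.2.1.parts * hMul ε x.2.2.parts v) = 0) :
    c = 0 := by
  classical
  suffices H : ∀ N : ℕ, ∀ μ ν : Nat.Partition N,
      c ⟨N, (μ, ν)⟩ = 0 by
    ext x
    obtain ⟨N, μ, ν⟩ := x
    exact H N μ ν
  intro N
  induction N using Nat.strong_induction_on with
  | _ N IH =>
  intro μ ν
  by_contra hc0
  set x₀ : ((N : ℕ) × (Nat.Partition N × Nat.Partition N)) := ⟨N, (μ, ν)⟩ with hx₀def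
  have hx0 : x₀ ∈ c.support := Finsupp.mem_support_iff.mpr hc0
  set dν : ℕ+ →₀ ℕ := eOf ν.parts with hdν
  set d₀ : ℕ+ →₀ ℕ := eOf μ.parts with hd₀
  have key := h (MvPolynomial.monomial dν (1 : F))
  have hkey := congrArg (MvPolynomial.coeff d₀) key
  rw [MvPolynomial.coeff_sum, MvPolynomial.coeff_zero] at hkey
  -- the scalar for the term x₀
  obtain ⟨s, hs, hs1, _⟩ := hMul_monomial ε hε ν.parts (fun n hn => ν.parts_pos hn) dν
  have hsne : s ≠ 0 := hs1 le_rfl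
  have hterm : ∀ x ∈ c.support, x ≠ x₀ →
      MvPolynomial.coeff d₀
        (c x • (pMul F x.2.1.parts * hMul ε x.2.2.parts (MvPolynomial.monomial dν (1 : F)))) = 0 := by
    rintro ⟨N', μ', ν'⟩ hx hxne
    rcases lt_trichotomy N' N with hlt | heq | hgt
    · rw [IH N' hlt μ' ν', zero_smul, MvPolynomial.coeff_zero]
    · subst heq
      obtain ⟨s', hs', _, hs2'⟩ := hMul_monomial ε hε ν'.parts
        (fun n hn => ν'.parts_pos hn) dν
      by_cases hν : ν' = ν
      · subst hν
        have hμ : μ' ≠ μ := by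
          intro hμ; exact hxne (by rw [hμ, hx₀def])
        have hne : eOf μ'.parts ≠ d₀ := by
          intro hEq
          exact hμ (Nat.Partition.ext (eOf_inj (fun n hn => μ'.parts_pos hn)
            (fun n hn => μ.parts_pos hn) (hEq.trans hd₀)))
        rw [← hdν] at hs'
        rw [hs', tsub_self, pMul_eq_monomial μ'.parts (fun n hn => μ'.parts_pos hn),
          mul_smul_comm, MvPolynomial.monomial_mul, add_zero, mul_one,
          MvPolynomial.coeff_smul, MvPolynomial.coeff_smul, MvPolynomial.coeff_monomial,
          if_neg hne, smul_zero, smul_zero]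
      · have hnle : ¬ eOf ν'.parts ≤ dν := by
          intro hle
          have hw : wtF (eOf ν'.parts) = wtF dν := by
            rw [hdν, wtF_eOf _ (fun n hn => ν'.parts_pos hn),
              wtF_eOf _ (fun n hn => ν.parts_pos hn), ν'.parts_sum, ν.parts_sum]
          exact hν (Nat.Partition.ext (eOf_inj (fun n hn => ν'.parts_pos hn)
            (fun n hn => ν.parts_pos hn) (eq_of_le_of_wtF_eq hle hw)))
        rw [hs', hs2' hnle, zero_smul, mul_zero, smul_zero, MvPolynomial.coeff_zero]
    · obtain ⟨s', hs', _, hs2'⟩ := hMul_monomial ε hε ν'.parts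
        (fun n hn => ν'.parts_pos hn) dν
      have hnle : ¬ eOf ν'.parts ≤ dν := by
        intro hle
        have := wtF_mono hle
        rw [hdν, wtF_eOf _ (fun n hn => ν'.parts_pos hn),
          wtF_eOf _ (fun n hn => ν.parts_pos hn), ν'.parts_sum, ν.parts_sum] at this
        omega
      rw [hs', hs2' hnle, zero_smul, mul_zero, smul_zero, MvPolynomial.coeff_zero]
  have hsum := Finset.sum_eq_single_of_mem x₀ hx0 hterm
  rw [hsum] at hkey
  rw [← hdν] at hs
  rw [show x₀.2.1 = μ from rfl, show x₀.2.2 = ν from rfl, hs, tsub_self,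
    pMul_eq_monomial μ.parts (fun n hn => μ.parts_pos hn),
    mul_smul_comm, MvPolynomial.monomial_mul, add_zero, mul_one,
    MvPolynomial.coeff_smul, MvPolynomial.coeff_smul, MvPolynomial.coeff_monomial,
    if_pos hd₀.symm, smul_eq_mul, smul_eq_mul, mul_one] at hkey
  exact hc0 (by rcases mul_eq_zero.mp hkey with h' | h' <;> [exact h'; exact absurd h' hsne])
end

section
/- Let b ∈ F and set η_n = ε_n^{−1}(b^n − 1) for n ≥ 1. Define R_0 = 1 and R_n = Σ_{λ ⊢ n} z_λ^{−1} η_λ p_λ for n ≥ 1 (equivalently Σ_n R_n z^n = exp(Σ_{n≥1} η_n p_n z^n/n)). Then for every n ≥ 1, Σ_{i=1}^n R_i q^ε_{n−i} = (b^n − 1) q^ε_n in Λ. -/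
open Finset MvPolynomial

namespace CP
variable {F : Type*} [Field F]

def wt (d : ℕ+ →₀ ℕ) : ℕ := d.sum fun i k => (i : ℕ) * k

noncomputable def toF (m : Multiset ℕ) : ℕ+ →₀ ℕ :=
  Finsupp.comapDomain (fun i : ℕ+ => (i : ℕ)) m.toFinsupp (PNat.coe_injective.injOn)

noncomputable def fromF (d : ℕ+ →₀ ℕ) : Multiset ℕ :=
  (Finsupp.toMultiset d).map (fun i : ℕ+ => (i : ℕ))

lemma toF_apply (m : Multiset ℕ) (i : ℕ+) : toF m i = m.count (i : ℕ) := rfl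

lemma count_fromF (d : ℕ+ →₀ ℕ) (i : ℕ+) : (fromF d).count ((i : ℕ+) : ℕ) = d i := by
  rw [fromF, Multiset.count_map_eq_count' _ _ PNat.coe_injective, Finsupp.count_toMultiset]

lemma pos_of_mem_fromF {d : ℕ+ →₀ ℕ} {a : ℕ} (ha : a ∈ fromF d) : 0 < a := by
  rw [fromF, Multiset.mem_map] at ha
  obtain ⟨i, _, rfl⟩ := ha
  exact i.pos

lemma toF_fromF (d : ℕ+ →₀ ℕ) : toF (fromF d) = d := by
  ext i; rw [toF_apply, count_fromF]

lemma fromF_toF {m : Multiset ℕ} (hm : ∀ a ∈ m, 0 < a) : fromF (toF m) = m := by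
  ext a
  rcases Nat.eq_zero_or_pos a with rfl | hpos
  · rw [Multiset.count_eq_zero_of_notMem, Multiset.count_eq_zero_of_notMem]
    · exact fun h => (hm 0 h).false
    · exact fun h => (pos_of_mem_fromF h).false
  · have := count_fromF (toF m) ⟨a, hpos⟩
    exact this


@[to_additive]
lemma prod_bridge {M : Type*} [CommMonoid M] (d : ℕ+ →₀ ℕ) (h : ℕ → ℕ → M) :
    ∏ i ∈ d.support, h (i : ℕ) (d i) = ∏ a ∈ (fromF d).toFinset, h a ((fromF d).count a) := by
  refine Finset.prod_bij (fun i _ => (i : ℕ)) ?_ ?_ ?_ ?_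
  · intro i hi
    rw [Multiset.mem_toFinset, ← Multiset.count_pos, count_fromF]
    exact Nat.pos_of_ne_zero (Finsupp.mem_support_iff.mp hi)
  · intro i _ j _ hij; exact PNat.coe_injective hij
  · intro a ha
    rw [Multiset.mem_toFinset, fromF, Multiset.mem_map] at ha
    obtain ⟨i, hi, rfl⟩ := ha
    refine ⟨i, ?_, rfl⟩
    rwa [← Finsupp.mem_toMultiset]
  · intro i _
    rw [count_fromF]

lemma sum_fromF (d : ℕ+ →₀ ℕ) : (fromF d).sum = wt d := by
  conv_lhs => rw [← Multiset.map_id (fromF d)]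
  rw [Finset.sum_multiset_map_count, wt, Finsupp.sum, sum_bridge d (fun a k => a * k)]
  exact Finset.sum_congr rfl fun a _ => by simp [mul_comm]


lemma zMult_fromF (d : ℕ+ →₀ ℕ) :
    ((zMult (fromF d) : ℕ) : F) = d.prod fun i k => ((i : ℕ) : F) ^ k * (Nat.factorial k : F) := by
  rw [zMult, Finsupp.prod, prod_bridge d (fun a k => ((a : F)) ^ k * (Nat.factorial k : F))]
  push_cast
  rfl

lemma prod_map_fromF (d : ℕ+ →₀ ℕ) (g : ℕ → F) :
    ((fromF d).map g).prod = d.prod fun i k => g (i : ℕ) ^ k := by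
  rw [Finset.prod_multiset_map_count, Finsupp.prod, prod_bridge d (fun a k => g a ^ k)]

/-- the generic coefficient -/
noncomputable def cw (g : ℕ → F) (d : ℕ+ →₀ ℕ) : F :=
  d.prod fun i k => g (i : ℕ) ^ k * (((i : ℕ) : F) ^ k * (Nat.factorial k : F))⁻¹

lemma coeff_weight_eq (d : ℕ+ →₀ ℕ) (g : ℕ → F) :
    ((zMult (fromF d) : ℕ) : F)⁻¹ * ((fromF d).map g).prod = cw g d := by
  rw [zMult_fromF, prod_map_fromF, cw, Finsupp.prod, Finsupp.prod, Finsupp.prod,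
    ← Finset.prod_inv_distrib, ← Finset.prod_mul_distrib]
  exact Finset.prod_congr rfl fun i _ => mul_comm _ _

lemma toF_cons {a : ℕ} (ha : 0 < a) (m : Multiset ℕ) :
    toF (a ::ₘ m) = (Finsupp.single (⟨a, ha⟩ : ℕ+) 1 : ℕ+ →₀ ℕ) + toF m := by
  ext i
  rw [Finsupp.add_apply, toF_apply, toF_apply, Multiset.count_cons]
  classical
  erw [Finsupp.single_apply]
  rcases eq_or_ne ((i : ℕ)) a with h | h
  · rw [if_pos h, if_pos (by exact PNat.coe_injective h.symm), add_comm]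
  · rw [if_neg h, if_neg (fun hh => h (by subst hh; rfl))]
    simp

lemma pMul_eq_monomial {m : Multiset ℕ} (hm : ∀ a ∈ m, 0 < a) :
    pMul F m = monomial (toF m) 1 := by
  induction m using Multiset.induction with
  | empty =>
    have : toF 0 = 0 := by ext i; rfl
    rw [this, pMul, Multiset.map_zero, Multiset.prod_zero, monomial_zero', C_1]
  | cons a m ih =>
    have ha : 0 < a := hm a (Multiset.mem_cons_self a m)
    rw [pMul, Multiset.map_cons, Multiset.prod_cons, ← pMul,
      ih (fun b hb => hm b (Multiset.mem_cons_of_mem hb)), toF_cons ha,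
      pv, dif_pos ha]
    exact (monomial_mul (s := Finsupp.single (⟨a, ha⟩ : ℕ+) 1) (s' := toF m) (a := (1 : F)) (b := 1)).trans (congrArg (monomial _) (one_mul (1 : F)))


noncomputable def Qs (g : ℕ → F) (n : ℕ) : MvPolynomial ℕ+ F :=
  ∑ μ : Nat.Partition n, ((zMult μ.parts : F)⁻¹ * (μ.parts.map g).prod) • pMul F μ.parts

lemma wt_toF {m : Multiset ℕ} (hm : ∀ a ∈ m, 0 < a) : wt (toF m) = m.sum := by
  conv_rhs => rw [← fromF_toF hm]
  rw [sum_fromF]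

lemma coeff_Qs (g : ℕ → F) (n : ℕ) (d : ℕ+ →₀ ℕ) :
    coeff d (Qs g n) = if wt d = n then cw g d else 0 := by
  rw [Qs, MvPolynomial.coeff_sum]
  simp_rw [MvPolynomial.coeff_smul, smul_eq_mul]
  have key : ∀ μ : Nat.Partition n, coeff d (pMul F μ.parts) =
      if toF μ.parts = d then 1 else 0 := by
    intro μ
    rw [pMul_eq_monomial (fun a ha => μ.parts_pos ha), MvPolynomial.coeff_monomial]
  by_cases h : wt d = n
  · set μ₀ : Nat.Partition n := ⟨fromF d, fun ha => pos_of_mem_fromF ha, by rw [sum_fromF, h]⟩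
    rw [Finset.sum_eq_single μ₀, if_pos h]
    · have h1 : toF μ₀.parts = d := toF_fromF d
      rw [key, if_pos h1, mul_one, coeff_weight_eq]
    · intro μ _ hne
      rw [key, if_neg, mul_zero]
      intro hc
      apply hne
      have hp : μ.parts = fromF d := by rw [← hc, fromF_toF (fun a ha => μ.parts_pos ha)]
      exact Nat.Partition.ext hp
    · intro hx; exact absurd (Finset.mem_univ _) hx
  · rw [if_neg h]
    apply Finset.sum_eq_zero
    intro μ _
    rw [key, if_neg, mul_zero]
    intro hc
    apply h
    rw [← hc, wt_toF (fun a ha => μ.parts_pos ha), μ.parts_sum]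

lemma prod_map_inv (m : Multiset ℕ) (g : ℕ → F) :
    ((m.map g).prod)⁻¹ = (m.map fun k => (g k)⁻¹).prod := by
  induction m using Multiset.induction with
  | empty =>
    rw [Multiset.map_zero, Multiset.map_zero, Multiset.prod_zero, inv_one]
  | cons a m ih =>
    rw [Multiset.map_cons, Multiset.map_cons, Multiset.prod_cons, Multiset.prod_cons,
      mul_inv, ih]

lemma qeps_coe (ε : ℕ → F) (n : ℕ) : qeps ε (n : ℤ) = Qs (fun k => (ε k)⁻¹) n := by
  rw [qeps, if_neg (not_lt.mpr (Int.natCast_nonneg n)), Qs]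
  exact Finset.sum_congr rfl (fun μ _ => by rw [mul_inv, prod_map_inv])

lemma wt_add (e f : ℕ+ →₀ ℕ) : wt (e + f) = wt e + wt f :=
  Finsupp.sum_add_index' (fun i => mul_zero _) (fun i b₁ b₂ => Nat.mul_add _ _ _)

lemma wt_eq_zero {e : ℕ+ →₀ ℕ} (h : wt e = 0) : e = 0 := by
  by_contra hne
  obtain ⟨i, hi⟩ := Finsupp.ne_iff.mp hne
  simp only [Finsupp.coe_zero, Pi.zero_apply] at hi
  have hmem : i ∈ e.support := Finsupp.mem_support_iff.mpr hi
  have : (i : ℕ) * e i ≤ wt e := Finset.single_le_sum (f := fun j : ℕ+ => (j : ℕ) * e j) (fun j _ => Nat.zero_le _) hmem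
  rw [h, Nat.le_zero, Nat.mul_eq_zero] at this
  rcases this with h1 | h1
  · exact i.ne_zero h1
  · exact hi h1

lemma conv_binom [CharZero F] (i : ℕ+) (x y : F) (k : ℕ) :
    ∑ p ∈ Finset.HasAntidiagonal.antidiagonal k,
      (x ^ p.1 * (((i : ℕ) : F) ^ p.1 * (Nat.factorial p.1 : F))⁻¹) *
      (y ^ p.2 * (((i : ℕ) : F) ^ p.2 * (Nat.factorial p.2 : F))⁻¹) =
    (x + y) ^ k * (((i : ℕ) : F) ^ k * (Nat.factorial k : F))⁻¹ := by
  have hc : ((i : ℕ) : F) ≠ 0 := Nat.cast_ne_zero.mpr i.ne_zero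
  rw [Commute.add_pow' (Commute.all x y) k, Finset.sum_mul]
  apply Finset.sum_congr rfl
  rintro ⟨p₁, p₂⟩ hp
  have hk : p₁ + p₂ = k := Finset.HasAntidiagonal.mem_antidiagonal.mp hp
  have hf1 : (Nat.factorial p₁ : F) ≠ 0 := Nat.cast_ne_zero.mpr (Nat.factorial_ne_zero _)
  have hf2 : (Nat.factorial p₂ : F) ≠ 0 := Nat.cast_ne_zero.mpr (Nat.factorial_ne_zero _)
  have hfk : (Nat.factorial k : F) ≠ 0 := Nat.cast_ne_zero.mpr (Nat.factorial_ne_zero _)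
  have hch : (k.choose p₁ : F) * (Nat.factorial p₁ : F) * (Nat.factorial p₂ : F)
      = (Nat.factorial k : F) := by
    rw [← Nat.cast_mul, ← Nat.cast_mul]
    congr 1
    have := Nat.choose_mul_factorial_mul_factorial (le_of_add_le_left hk.le)
    rw [← hk] at this ⊢
    simpa [Nat.add_sub_cancel_left] using this
  have hpow : ((i : ℕ) : F) ^ p₁ * ((i : ℕ) : F) ^ p₂ = ((i : ℕ) : F) ^ k := by
    rw [← pow_add, hk]
  rw [nsmul_eq_mul]
  field_simp
  ring_nf
  rw [← hpow, ← hch]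
  ring

lemma core' (φ ψ χ : ℕ+ → ℕ → F) (hφ0 : ∀ i, φ i 0 = 1) (hψ0 : ∀ i, ψ i 0 = 1)
    (hconv : ∀ i k, ∑ p ∈ Finset.HasAntidiagonal.antidiagonal k, φ i p.1 * ψ i p.2 = χ i k)
    (d : ℕ+ →₀ ℕ) :
    ∑ p ∈ Finset.HasAntidiagonal.antidiagonal d, p.1.prod φ * p.2.prod ψ = d.prod χ := by
  have hχ0 : ∀ i, χ i 0 = 1 := by
    intro i
    rw [← hconv i 0]
    simp [hφ0, hψ0]
  induction d using Finsupp.induction with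
  | zero => simp [Finsupp.antidiagonal_zero]
  | single_add a k g hag hk ih =>
    have hga : g a = 0 := Finsupp.notMem_support_iff.mp hag
    have hef : ∀ x : ℕ+ →₀ ℕ, x a = 0 → ∀ (k' : ℕ) (θ : ℕ+ → ℕ → F), (∀ i, θ i 0 = 1) →
        (Finsupp.single a k' + x).prod θ = θ a k' * x.prod θ := by
      intro x hx k' θ hθ
      have hd : Disjoint (Finsupp.single a k' : ℕ+ →₀ ℕ).support x.support := by
        refine Finset.disjoint_left.mpr fun b hb hbx => ?_
        have hba : b = a := by
          have := Finsupp.support_single_subset hb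
          simpa using this
        subst hba
        exact Finsupp.mem_support_iff.mp hbx hx
      rw [Finsupp.prod_add_index_of_disjoint hd, Finsupp.prod_single_index (hθ a)]
    have step : ∑ p ∈ Finset.HasAntidiagonal.antidiagonal ((Finsupp.single a k : ℕ+ →₀ ℕ) + g),
        p.1.prod φ * p.2.prod ψ
        = ∑ q ∈ (Finset.HasAntidiagonal.antidiagonal k) ×ˢ (Finset.HasAntidiagonal.antidiagonal g),
          (φ a q.1.1 * q.2.1.prod φ) * (ψ a q.1.2 * q.2.2.prod ψ) := by
      refine (Finset.sum_nbij'
        (i := fun q => ((Finsupp.single a q.1.1 + q.2.1, Finsupp.single a q.1.2 + q.2.2) :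
          (ℕ+ →₀ ℕ) × (ℕ+ →₀ ℕ)))
        (j := fun p => ((p.1 a, p.2 a), (p.1.erase a, p.2.erase a)))
        ?_ ?_ ?_ ?_ ?_).symm
      · rintro ⟨⟨k₁, k₂⟩, ⟨e, f⟩⟩ hq
        rw [Finset.mem_product, Finset.HasAntidiagonal.mem_antidiagonal, Finset.HasAntidiagonal.mem_antidiagonal] at hq
        rw [Finset.HasAntidiagonal.mem_antidiagonal]
        obtain ⟨h1, h2⟩ := hq
        rw [← h1, ← h2, Finsupp.single_add]
        exact add_add_add_comm (Finsupp.single a k₁) e (Finsupp.single a k₂) f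
      · rintro ⟨p₁, p₂⟩ hp
        rw [Finset.HasAntidiagonal.mem_antidiagonal] at hp
        rw [Finset.mem_product, Finset.HasAntidiagonal.mem_antidiagonal, Finset.HasAntidiagonal.mem_antidiagonal]
        constructor
        · have := DFunLike.congr_fun hp a
          simpa [hga] using this
        · have := congr_arg (Finsupp.erase a) hp
          rwa [Finsupp.erase_add, Finsupp.erase_add, Finsupp.erase_single,
            Finsupp.erase_of_notMem_support hag, zero_add] at this
      · rintro ⟨⟨k₁, k₂⟩, ⟨e, f⟩⟩ hq
        rw [Finset.mem_product, Finset.HasAntidiagonal.mem_antidiagonal, Finset.HasAntidiagonal.mem_antidiagonal] at hq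
        have h0 : (e + f) a = 0 := by rw [hq.2]; exact hga
        rw [Finsupp.add_apply] at h0
        have hea : e a = 0 := by omega
        have hfa : f a = 0 := by omega
        have h1 : (Finsupp.single a k₁ + e) a = k₁ := by
          rw [Finsupp.add_apply, Finsupp.single_eq_same, hea, add_zero]
        have h2 : (Finsupp.single a k₂ + f) a = k₂ := by
          rw [Finsupp.add_apply, Finsupp.single_eq_same, hfa, add_zero]
        have h3 : (Finsupp.single a k₁ + e).erase a = e := by
          rw [Finsupp.erase_add, Finsupp.erase_single, zero_add,
            Finsupp.erase_of_notMem_support (Finsupp.notMem_support_iff.mpr hea)]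
        have h4 : (Finsupp.single a k₂ + f).erase a = f := by
          rw [Finsupp.erase_add, Finsupp.erase_single, zero_add,
            Finsupp.erase_of_notMem_support (Finsupp.notMem_support_iff.mpr hfa)]
        simp only [h1, h2, h3, h4]
      · rintro ⟨p₁, p₂⟩ hp
        simp only [Prod.mk.injEq]
        exact ⟨Finsupp.single_add_erase a p₁, Finsupp.single_add_erase a p₂⟩
      · rintro ⟨⟨k₁, k₂⟩, ⟨e, f⟩⟩ hq
        rw [Finset.mem_product, Finset.HasAntidiagonal.mem_antidiagonal, Finset.HasAntidiagonal.mem_antidiagonal] at hq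
        have h0 : (e + f) a = 0 := by rw [hq.2]; exact hga
        rw [Finsupp.add_apply] at h0
        have hea : e a = 0 := by omega
        have hfa : f a = 0 := by omega
        rw [hef e hea k₁ φ hφ0, hef f hfa k₂ ψ hψ0]
    have hd2 : Disjoint (Finsupp.single a k : ℕ+ →₀ ℕ).support g.support := by
      refine Finset.disjoint_left.mpr fun b hb hbg => ?_
      have hba : b = a := by
        have := Finsupp.support_single_subset hb
        simpa using this
      subst hba
      exact hag hbg
    have rearr : ∑ u ∈ Finset.HasAntidiagonal.antidiagonal k, ∑ v ∈ Finset.HasAntidiagonal.antidiagonal g,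
        (φ a u.1 * v.1.prod φ) * (ψ a u.2 * v.2.prod ψ)
        = (∑ u ∈ Finset.HasAntidiagonal.antidiagonal k, φ a u.1 * ψ a u.2) *
          (∑ v ∈ Finset.HasAntidiagonal.antidiagonal g, v.1.prod φ * v.2.prod ψ) := by
      rw [Finset.sum_mul_sum]
      exact Finset.sum_congr rfl fun u _ => Finset.sum_congr rfl fun v _ => by ring
    rw [step, Finset.sum_product, rearr, hconv, ih,
      Finsupp.prod_add_index_of_disjoint hd2, Finsupp.prod_single_index (hχ0 a)]

lemma cw_zero (g : ℕ → F) : cw g 0 = 1 := by simp [cw]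

lemma cw_congr {g g' : ℕ → F} (h : ∀ k, 1 ≤ k → g k = g' k) (d : ℕ+ →₀ ℕ) :
    cw g d = cw g' d :=
  Finsupp.prod_congr fun i _ => by rw [h (i : ℕ) i.one_le]

lemma cw_conv [CharZero F] (x y : ℕ → F) (d : ℕ+ →₀ ℕ) :
    ∑ p ∈ Finset.HasAntidiagonal.antidiagonal d, cw x p.1 * cw y p.2 = cw (fun k => x k + y k) d :=
  core' _ _ _ (fun i => by simp) (fun i => by simp)
    (fun i k => conv_binom i (x (i : ℕ)) (y (i : ℕ)) k) d

lemma cw_scale (b : F) (ε : ℕ → F) (d : ℕ+ →₀ ℕ) :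
    cw (fun k => (ε k)⁻¹ * b ^ k) d = b ^ wt d * cw (fun k => (ε k)⁻¹) d := by
  rw [cw, cw, wt, Finsupp.prod, Finsupp.prod, Finsupp.sum,
    ← Finset.prod_pow_eq_pow_sum, ← Finset.prod_mul_distrib]
  apply Finset.prod_congr rfl
  intro i _
  rw [mul_pow, pow_mul]
  ring

lemma wform_inv (ε : ℕ → F) (d : ℕ+ →₀ ℕ) :
    (wform ε d)⁻¹ = cw (fun k => (ε k)⁻¹) d := by
  rw [wform, cw, Finsupp.prod, Finsupp.prod, ← Finset.prod_inv_distrib]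
  apply Finset.prod_congr rfl
  intro i _
  rw [mul_inv, mul_inv, inv_pow]
  ring

theorem creating_part'
    (F : Type*) [Field F] [CharZero F] (ε η : ℕ → F)
    (hε : ∀ k : ℕ, 1 ≤ k → ε k ≠ 0)
    (b : F) (hη : ∀ k : ℕ, 1 ≤ k → η k = (ε k)⁻¹ * (b ^ k - 1))
    (n : ℕ) (hn : 1 ≤ n) :
    ∑ i ∈ Finset.Icc 1 n, Rgen η i * qeps ε ((n : ℤ) - i) =
      (b ^ n - 1) • qeps ε (n : ℤ) := by
  have hQR : ∀ i : ℕ, Rgen η i = Qs η i := fun i => rfl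
  apply MvPolynomial.ext
  intro d
  rw [MvPolynomial.coeff_sum, MvPolynomial.coeff_smul, qeps_coe, coeff_Qs, smul_eq_mul]
  have hterm : ∀ i ∈ Finset.Icc 1 n, coeff d (Rgen η i * qeps ε ((n : ℤ) - i)) =
      ∑ p ∈ Finset.HasAntidiagonal.antidiagonal d,
        (if wt p.1 = i then cw η p.1 else 0) *
        (if wt p.2 = n - i then cw (fun k => (ε k)⁻¹) p.2 else 0) := by
    intro i hi
    obtain ⟨hi1, hi2⟩ := Finset.mem_Icc.mp hi
    have hcast : ((n : ℤ) - i) = ((n - i : ℕ) : ℤ) := by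
      rw [Nat.cast_sub hi2]
    rw [hcast, qeps_coe, hQR, MvPolynomial.coeff_mul]
    exact Finset.sum_congr rfl fun p _ => by rw [coeff_Qs, coeff_Qs]
  rw [Finset.sum_congr rfl hterm, Finset.sum_comm]
  have hswap : ∀ p ∈ Finset.HasAntidiagonal.antidiagonal d,
      (∑ i ∈ Finset.Icc 1 n, (if wt p.1 = i then cw η p.1 else 0) *
        (if wt p.2 = n - i then cw (fun k => (ε k)⁻¹) p.2 else 0))
      = if wt p.1 ∈ Finset.Icc 1 n then
          cw η p.1 * (if wt p.2 = n - wt p.1 then cw (fun k => (ε k)⁻¹) p.2 else 0)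
        else 0 := by
    intro p _
    simp only [ite_mul, zero_mul]
    rw [Finset.sum_ite_eq]
  rw [Finset.sum_congr rfl hswap]
  by_cases hd : wt d = n
  · rw [if_pos hd]
    have hstep : ∀ p ∈ Finset.HasAntidiagonal.antidiagonal d,
        (if wt p.1 ∈ Finset.Icc 1 n then
          cw η p.1 * (if wt p.2 = n - wt p.1 then cw (fun k => (ε k)⁻¹) p.2 else 0)
        else 0)
        = (cw η p.1 * cw (fun k => (ε k)⁻¹) p.2) -
          (if p.1 = 0 then cw η p.1 * cw (fun k => (ε k)⁻¹) p.2 else 0) := by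
      intro p hp
      have hw : wt p.1 + wt p.2 = n := by
        rw [← wt_add, Finset.HasAntidiagonal.mem_antidiagonal.mp hp, hd]
      by_cases h0 : wt p.1 = 0
      · have hp0 : p.1 = 0 := wt_eq_zero h0
        rw [if_neg (by rw [Finset.mem_Icc]; omega), if_pos hp0]
        ring
      · have hp0 : p.1 ≠ 0 := fun he => h0 (by rw [he]; simp [wt])
        rw [if_pos (Finset.mem_Icc.mpr ⟨by omega, by omega⟩), if_pos (by omega), if_neg hp0]
        ring
    rw [Finset.sum_congr rfl hstep, Finset.sum_sub_distrib]
    have hfull : ∑ p ∈ Finset.HasAntidiagonal.antidiagonal d, cw η p.1 * cw (fun k => (ε k)⁻¹) p.2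
        = b ^ n * cw (fun k => (ε k)⁻¹) d := by
      rw [cw_conv]
      rw [cw_congr (g' := fun k => (ε k)⁻¹ * b ^ k) (fun k hk => by rw [hη k hk]; ring) d]
      rw [cw_scale, hd]
    have hzero : ∑ p ∈ Finset.HasAntidiagonal.antidiagonal d,
        (if p.1 = 0 then cw η p.1 * cw (fun k => (ε k)⁻¹) p.2 else 0)
        = cw (fun k => (ε k)⁻¹) d := by
      rw [Finset.sum_eq_single_of_mem ((0, d) : (ℕ+ →₀ ℕ) × (ℕ+ →₀ ℕ))
        (Finset.HasAntidiagonal.mem_antidiagonal.mpr (zero_add d))]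
      · rw [if_pos rfl, cw_zero, one_mul]
      · rintro ⟨p1, p2⟩ hp hne
        rw [if_neg]
        intro hp0
        apply hne
        have h2 := Finset.HasAntidiagonal.mem_antidiagonal.mp hp
        dsimp only at hp0 h2 ⊢
        rw [hp0, zero_add] at h2
        rw [hp0, h2]
    rw [hfull, hzero]
    ring
  · rw [if_neg hd, mul_zero]
    apply Finset.sum_eq_zero
    intro p hp
    have hw : wt p.1 + wt p.2 = wt d := by
      rw [← wt_add, Finset.HasAntidiagonal.mem_antidiagonal.mp hp]
    split_ifs with h1 h2
    · exfalso
      rw [Finset.mem_Icc] at h1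
      omega
    · exact mul_zero _
    · rfl
end CP

/-- **Lemma 4.3** : if `η_n = ε_n⁻¹(b^n - 1)` then with `R_0 = 1`,
`R_n = Σ_{λ ⊢ n} z_λ⁻¹ η_λ p_λ`, one has `Σ_{i=1}^n R_i q^ε_{n-i} = (b^n - 1) q^ε_n`
for every `n ≥ 1`. -/
theorem creating_part
    (F : Type*) [Field F] [CharZero F] (ε η : ℕ → F)
    (hε : ∀ k : ℕ, 1 ≤ k → ε k ≠ 0)
    (b : F) (hη : ∀ k : ℕ, 1 ≤ k → η k = (ε k)⁻¹ * (b ^ k - 1))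
    (n : ℕ) (hn : 1 ≤ n) :
    ∑ i ∈ Finset.Icc 1 n, Rgen η i * qeps ε ((n : ℤ) - i) =
      (b ^ n - 1) • qeps ε (n : ℤ) := by
  exact CP.creating_part' F ε η hε b hη n hn
end

section
/- Let a, b, c ∈ F with c ≠ 0 and a^n ≠ 1, b^n ≠ 1 for all n ≥ 1, and set ε_n = (b^n−1)c^{−n}/(1−a^n), τ_n = 1 − a^n, η_n = (1 − a^n)c^n. For a partition μ set e_μ = 1 + (1−a) Σ_{i=1}^{l(μ)} (b^{μ_i}−1) a^{i−1}, and assume the values e_ν are pairwise distinct over partitions ν of a fixed weight N. For each partition λ of N let Q_λ = Σ_{μ ⊢ N, μ ≥ λ} C_{λμ} q^ε_μ be the unique element with C_{λλ} = 1 satisfying X_0 Q_λ = e_λ Q_λ. Then ⟨Q_λ, Q_μ⟩ = 0 for all partitions λ ≠ μ of N. -/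
open Finset MvPolynomial

/-- `q^ε_λ = q^ε_{λ₁} ⋯ q^ε_{λ_s}`. -/
noncomputable def qepsList {F : Type*} [Field F] (ε : ℕ → F) (l : List ℕ) :
    MvPolynomial ℕ+ F := (l.map fun n => qeps ε (n : ℤ)).prod

section MacdAux
variable {F : Type*} [Field F] (ε : ℕ → F)

lemma bform_eq_sum (f g : MvPolynomial ℕ+ F) {S : Finset (ℕ+ →₀ ℕ)} (hS : f.support ⊆ S) :
    bform ε f g = ∑ d ∈ S, coeff d f * coeff d g * wform ε d := by
  rw [bform]
  exact Finset.sum_subset hS fun d _ hd => by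
    rw [MvPolynomial.notMem_support_iff.mp hd, zero_mul, zero_mul]

lemma bform_comm (f g : MvPolynomial ℕ+ F) : bform ε f g = bform ε g f := by
  rw [bform_eq_sum ε f g (S := f.support ∪ g.support) Finset.subset_union_left,
      bform_eq_sum ε g f (S := f.support ∪ g.support) Finset.subset_union_right]
  exact Finset.sum_congr rfl fun d _ => by ring

@[simp] lemma bform_zero_left (g : MvPolynomial ℕ+ F) : bform ε 0 g = 0 := by simp [bform]

lemma bform_add_left (f f' g : MvPolynomial ℕ+ F) :
    bform ε (f + f') g = bform ε f g + bform ε f' g := by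
  rw [bform_eq_sum ε (f + f') g (S := f.support ∪ f'.support)
        (MvPolynomial.support_add (p := f) (q := f')),
      bform_eq_sum ε f g (S := f.support ∪ f'.support) Finset.subset_union_left,
      bform_eq_sum ε f' g (S := f.support ∪ f'.support) Finset.subset_union_right,
      ← Finset.sum_add_distrib]
  exact Finset.sum_congr rfl fun d _ => by rw [MvPolynomial.coeff_add]; ring

lemma bform_smul_left (c : F) (f g : MvPolynomial ℕ+ F) :
    bform ε (c • f) g = c * bform ε f g := by
  rw [bform_eq_sum ε (c • f) g (S := f.support) MvPolynomial.support_smul, bform,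
      Finset.mul_sum]
  exact Finset.sum_congr rfl fun d _ => by rw [MvPolynomial.coeff_smul, smul_eq_mul]; ring

lemma bform_smul_right (c : F) (f g : MvPolynomial ℕ+ F) :
    bform ε f (c • g) = c * bform ε f g := by
  rw [bform_comm, bform_smul_left, bform_comm]

lemma bform_sum_left {ι : Type*} (s : Finset ι) (f : ι → MvPolynomial ℕ+ F)
    (g : MvPolynomial ℕ+ F) :
    bform ε (∑ i ∈ s, f i) g = ∑ i ∈ s, bform ε (f i) g := by
  classical
  induction s using Finset.induction_on with
  | empty => simp
  | insert _ _ h ih => rw [Finset.sum_insert h, Finset.sum_insert h, bform_add_left, ih]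

lemma wform_add_single (d : ℕ+ →₀ ℕ) (i : ℕ+) :
    wform ε (d + Finsupp.single i 1) =
      ((i : ℕ) : F) * ((d i + 1 : ℕ) : F) * ε (i : ℕ) * wform ε d := by
  classical
  set G : ℕ+ → ℕ → F := fun j k => ((j : ℕ) : F) ^ k * (Nat.factorial k : F) * ε (j : ℕ) ^ k
    with hG
  have hG0 : ∀ j : ℕ+, G j 0 = 1 := by intro j; simp [hG]
  have hGsucc : ∀ (j : ℕ+) (k : ℕ),
      G j (k + 1) = ((j : ℕ) : F) * ((k + 1 : ℕ) : F) * ε (j : ℕ) * G j k := by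
    intro j k
    simp only [hG, pow_succ, Nat.factorial_succ, Nat.cast_mul]
    ring
  set e : ℕ+ →₀ ℕ := d + Finsupp.single i 1 with he
  set S : Finset ℕ+ := insert i (e.support ∪ d.support) with hS
  have hiS : i ∈ S := Finset.mem_insert_self _ _
  have h1 : wform ε e = ∏ j ∈ S, G j (e j) :=
    Finsupp.prod_of_support_subset _
      ((Finset.subset_union_left).trans (Finset.subset_insert _ _)) _ (fun j _ => hG0 j)
  have h2 : wform ε d = ∏ j ∈ S, G j (d j) :=
    Finsupp.prod_of_support_subset _
      ((Finset.subset_union_right).trans (Finset.subset_insert _ _)) _ (fun j _ => hG0 j)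
  rw [h1, h2, ← Finset.mul_prod_erase S _ hiS, ← Finset.mul_prod_erase S (fun j => G j (d j)) hiS]
  have happ : e i = d i + 1 := by
    rw [he, Finsupp.add_apply, Finsupp.single_eq_same]
  rw [happ, hGsucc i (d i)]
  have herase : ∏ j ∈ S.erase i, G j (e j)
      = ∏ j ∈ S.erase i, G j (d j) := by
    refine Finset.prod_congr rfl fun j hj => ?_
    have hne : j ≠ i := (Finset.mem_erase.mp hj).1
    rw [he, Finsupp.add_apply, Finsupp.single_eq_of_ne' (Ne.symm hne), add_zero]
  rw [herase]
  ring

lemma coeff_pderiv' (i : ℕ+) (f : MvPolynomial ℕ+ F) (d : ℕ+ →₀ ℕ) :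
    coeff d (pderiv i f) = ((d i + 1 : ℕ) : F) * coeff (d + Finsupp.single i 1) f := by
  classical
  induction f using MvPolynomial.induction_on' with
  | add p q hp hq => simp only [map_add, coeff_add, hp, hq]; ring
  | monomial s a =>
    rw [pderiv_monomial, coeff_monomial, coeff_monomial]
    by_cases hsi : s i = 0
    · have hs : s - Finsupp.single i 1 = s := by
        ext j
        by_cases hj : j = i
        · subst hj; simp [hsi]
        · simp [Finsupp.single_eq_of_ne' (Ne.symm hj)]
      rw [hs]
      have hne : s ≠ d + Finsupp.single i 1 := by
        intro h
        apply absurd hsi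
        rw [h]; simp
      rw [if_neg hne, hsi]
      simp
    · have hle : Finsupp.single i 1 ≤ s := by
        rw [Finsupp.single_le_iff]
        omega
      have hiff : s - Finsupp.single i 1 = d ↔ s = d + Finsupp.single i 1 := by
        constructor
        · intro h; rw [← h, tsub_add_cancel_of_le hle]
        · intro h; rw [h, add_tsub_cancel_right]
      by_cases h : s = d + Finsupp.single i 1
      · rw [if_pos (hiff.mpr h), if_pos h, h]
        simp only [Finsupp.add_apply, Finsupp.single_eq_same]
        push_cast
        ring
      · rw [if_neg (fun hh => h (hiff.mp hh)), if_neg h, mul_zero]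

lemma bform_pv_mul (n : ℕ) (u v : MvPolynomial ℕ+ F) :
    bform ε (pv F n * u) v = bform ε u (hpos ε n v) := by
  by_cases h : 0 < n
  · rw [pv, dif_pos h, hpos, dif_pos h]
    set i : ℕ+ := ⟨n, h⟩ with hi
    rw [bform, support_X_mul, Finset.sum_map, bform]
    refine Finset.sum_congr rfl fun d hd => ?_
    have e1 : (addLeftEmbedding (Finsupp.single i 1)) d = Finsupp.single i 1 + d := rfl
    have e2 : ((((n : F) * ε n) • (pderiv i).toLinearMap) v) = ((n : F) * ε n) • pderiv i v :=
      rfl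
    rw [e1, coeff_X_mul, add_comm (Finsupp.single i 1) d, wform_add_single]
    change _ = coeff d u * coeff d (((n : F) * ε n) • pderiv i v) * wform ε d
    rw [MvPolynomial.coeff_smul, smul_eq_mul, coeff_pderiv']
    have e3 : ((i : ℕ) : F) = (n : F) := rfl
    have e4 : ε (i : ℕ) = ε n := rfl
    rw [e3, e4]
    ring
  · have h0 : pv F n = 1 := by rw [pv, dif_neg h]
    have h1 : hpos ε n = 1 := by rw [hpos, dif_neg h]
    rw [h0, h1, one_mul, Module.End.one_apply]

lemma bform_listprod_mul (L : List ℕ) (u v : MvPolynomial ℕ+ F) :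
    bform ε ((L.map (pv F)).prod * u) v
      = bform ε u (((L.reverse.map (hpos ε)).prod) v) := by
  induction L generalizing v with
  | nil => simp
  | cons a t ih =>
    rw [List.map_cons, List.prod_cons, mul_assoc, bform_pv_mul, ih,
        List.reverse_cons, List.map_append, List.prod_append, List.map_singleton,
        List.prod_singleton, Module.End.mul_apply]

lemma bform_pMul_mul (m : Multiset ℕ) (u v : MvPolynomial ℕ+ F) :
    bform ε (pMul F m * u) v = bform ε u (hMul ε m v) := by
  have h1 : pMul F m = (((Multiset.sort m (· ≥ ·)).reverse).map (pv F)).prod := by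
    rw [pMul]
    conv_lhs => rw [← Multiset.sort_eq (s := m) (r := (· ≥ ·))]
    rw [Multiset.map_coe, Multiset.prod_coe, List.map_reverse, List.prod_reverse]
  rw [h1, bform_listprod_mul, List.reverse_reverse, hMul]

/-- The weight of a monomial. -/
def wtd (d : ℕ+ →₀ ℕ) : ℕ := d.sum fun i k => (i : ℕ) * k

lemma wtd_add_single (d : ℕ+ →₀ ℕ) (i : ℕ+) :
    wtd (d + Finsupp.single i 1) = wtd d + (i : ℕ) := by
  classical
  rw [wtd, wtd, Finsupp.sum_add_index' (fun j => mul_zero _) (fun j k1 k2 => mul_add _ _ _)]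
  congr 1
  refine (Finsupp.sum_single_index ?_).trans (mul_one _)
  exact mul_zero _

lemma support_hpos_wt {n : ℕ} {f : MvPolynomial ℕ+ F} {d : ℕ+ →₀ ℕ}
    (hd : d ∈ ((hpos ε n) f).support) : wtd d + n ≤ wdeg f := by
  by_cases h : 0 < n
  · rw [hpos, dif_pos h] at hd
    set i : ℕ+ := ⟨n, h⟩ with hi
    have hd2 : d ∈ (pderiv i f).support :=
      MvPolynomial.support_smul (a := (n : F) * ε n) (f := pderiv i f) hd
    have h3 : coeff (d + Finsupp.single i 1) f ≠ 0 := by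
      intro hzero
      apply MvPolynomial.mem_support_iff.mp hd2
      rw [coeff_pderiv', hzero, mul_zero]
    have h4 := Finset.le_sup (f := wtd) (MvPolynomial.mem_support_iff.mpr h3)
    rw [wtd_add_single] at h4
    exact h4
  · have hn : n = 0 := by omega
    rw [hpos, dif_neg h, Module.End.one_apply] at hd
    rw [hn, add_zero]
    exact Finset.le_sup (f := wtd) hd

lemma support_hprodlist_wt (L : List ℕ) (f : MvPolynomial ℕ+ F) :
    ∀ d ∈ (((L.map (hpos ε)).prod) f).support, wtd d + L.sum ≤ wdeg f := by
  induction L with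
  | nil =>
    intro d hd
    rw [List.map_nil, List.prod_nil, Module.End.one_apply] at hd
    rw [List.sum_nil, add_zero]
    exact Finset.le_sup (f := wtd) hd
  | cons a t ih =>
    intro d hd
    rw [List.map_cons, List.prod_cons, Module.End.mul_apply] at hd
    set g := ((t.map (hpos ε)).prod) f with hg
    have h1 : wtd d + a ≤ wdeg g := support_hpos_wt ε hd
    have hgne : g.support.Nonempty := by
      rw [MvPolynomial.support_nonempty]
      intro h0
      rw [h0, map_zero] at hd
      simp at hd
    obtain ⟨d0, hd0, hsup⟩ := Finset.exists_mem_eq_sup g.support hgne wtd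
    have h2 : wtd d0 + t.sum ≤ wdeg f := ih d0 hd0
    have h3 : wdeg g = wtd d0 := hsup
    rw [List.sum_cons]
    omega

lemma hMul_eq_zero {m : Multiset ℕ} {f : MvPolynomial ℕ+ F} (h : wdeg f < m.sum) :
    hMul ε m f = 0 := by
  by_contra hne
  obtain ⟨d, hd⟩ := MvPolynomial.support_nonempty.mpr hne
  rw [hMul] at hd
  have h1 := support_hprodlist_wt ε (Multiset.sort m (· ≥ ·)) f d hd
  have hsum : (Multiset.sort m (· ≥ ·)).sum = m.sum := by
    rw [← Multiset.sum_coe, Multiset.sort_eq]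
  omega

lemma prod_map_pow_sum (c : F) (m : Multiset ℕ) :
    (m.map fun n => c ^ n).prod = c ^ m.sum := by
  induction m using Multiset.induction_on with
  | empty => simp
  | cons a s ih => simp [pow_add, ih, mul_comm]

lemma prod_map_eta {η τ : ℕ → F} {c : F} (hrel : ∀ n : ℕ, 1 ≤ n → η n = τ n * c ^ n)
    {N : ℕ} (μ : Nat.Partition N) :
    (μ.parts.map η).prod = (μ.parts.map τ).prod * c ^ N := by
  have h1 : μ.parts.map η = μ.parts.map fun n => τ n * c ^ n :=
    Multiset.map_congr rfl fun n hn => hrel n (μ.parts_pos hn)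
  rw [h1, Multiset.prod_map_mul, prod_map_pow_sum, μ.parts_sum]

lemma X0_selfadjoint (η τ : ℕ → F) (c : F)
    (hrel : ∀ n : ℕ, 1 ≤ n → η n = τ n * c ^ n) (f g : MvPolynomial ℕ+ F) :
    bform ε (X0op ε η τ f) g = bform ε f (X0op ε η τ g) := by
  have key : ∀ (f g : MvPolynomial ℕ+ F) (M : ℕ), wdeg f ≤ M →
      bform ε (X0op ε η τ f) g
        = ∑ N ∈ Finset.range (M + 1), ∑ μ : Nat.Partition N, ∑ ν : Nat.Partition N,
            ((zMult μ.parts : F)⁻¹ * (μ.parts.map η).prod * (zMult ν.parts : F)⁻¹ *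
              (ν.parts.map τ).prod) * bform ε (pMul F μ.parts * hMul ε ν.parts f) g := by
    intro f g M hM
    rw [X0op, bform_sum_left,
        Finset.sum_subset (Finset.range_subset_range.mpr (by omega : wdeg f + 1 ≤ M + 1))
          (fun N _ hN => by
            have hN' : wdeg f < N := by
              rw [Finset.mem_range, not_lt] at hN
              omega
            have hz : ∀ ν : Nat.Partition N, hMul ε ν.parts f = 0 := fun ν =>
              hMul_eq_zero ε (by rw [ν.parts_sum]; exact hN')
            simp [hz])]
    refine Finset.sum_congr rfl fun N _ => ?_
    rw [bform_sum_left]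
    refine Finset.sum_congr rfl fun μ _ => ?_
    rw [bform_sum_left]
    refine Finset.sum_congr rfl fun ν _ => ?_
    rw [bform_smul_left]
  rw [key f g (max (wdeg f) (wdeg g)) (le_max_left _ _), bform_comm,
      key g f (max (wdeg f) (wdeg g)) (le_max_right _ _)]
  refine Finset.sum_congr rfl fun N _ => ?_
  conv_rhs => rw [Finset.sum_comm]
  refine Finset.sum_congr rfl fun μ _ => ?_
  refine Finset.sum_congr rfl fun ν _ => ?_
  rw [bform_pMul_mul, bform_pMul_mul, bform_comm ε (hMul ε μ.parts g) (hMul ε ν.parts f)]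
  rw [prod_map_eta hrel μ, prod_map_eta hrel ν]
  ring

end MacdAux


/-- **Corollary 4.5 (orthogonality)** : with pairwise distinct eigenvalues `e_ν` over
partitions `ν` of weight `N`, the eigenvectors `Q_λ = Σ_{μ ≥ λ} C_{λμ} q^ε_μ`
(`C_{λλ} = 1`, `X₀ Q_λ = e_λ Q_λ`) satisfy `⟨Q_λ, Q_μ⟩ = 0` for `λ ≠ μ`. -/
theorem macdonald_orthogonality
    (F : Type*) [Field F] [CharZero F] (a b c : F) (hc : c ≠ 0)
    (ha : ∀ n : ℕ, 1 ≤ n → a ^ n ≠ 1) (hb : ∀ n : ℕ, 1 ≤ n → b ^ n ≠ 1)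
    (ε η τ : ℕ → F)
    (hε : ∀ n : ℕ, 1 ≤ n → ε n = (b ^ n - 1) * c⁻¹ ^ n / (1 - a ^ n))
    (hτ : ∀ n : ℕ, 1 ≤ n → τ n = 1 - a ^ n)
    (hη : ∀ n : ℕ, 1 ≤ n → η n = (1 - a ^ n) * c ^ n)
    (N : ℕ)
    (hsep : ∀ ρ ∈ partitionsOfWeight N, ∀ σ ∈ partitionsOfWeight N,
      ρ ≠ σ → eigval a b ρ ≠ eigval a b σ)
    (l m : List ℕ) (hl : l ∈ partitionsOfWeight N) (hm : m ∈ partitionsOfWeight N)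
    (hlm : l ≠ m)
    (Cl Cm : List ℕ → F)
    (hCl : (∀ μ ∈ partitionsOfWeight N, ¬ Dominates μ l → Cl μ = 0) ∧ Cl l = 1 ∧
      X0op ε η τ (∑ μ ∈ partitionsOfWeight N, Cl μ • qepsList ε μ) =
        eigval a b l • ∑ μ ∈ partitionsOfWeight N, Cl μ • qepsList ε μ)
    (hCm : (∀ μ ∈ partitionsOfWeight N, ¬ Dominates μ m → Cm μ = 0) ∧ Cm m = 1 ∧
      X0op ε η τ (∑ μ ∈ partitionsOfWeight N, Cm μ • qepsList ε μ) =
        eigval a b m • ∑ μ ∈ partitionsOfWeight N, Cm μ • qepsList ε μ) :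
    bform ε (∑ μ ∈ partitionsOfWeight N, Cl μ • qepsList ε μ)
      (∑ μ ∈ partitionsOfWeight N, Cm μ • qepsList ε μ) = 0 := by
  obtain ⟨-, -, hXl⟩ := hCl
  obtain ⟨-, -, hXm⟩ := hCm
  set Ql := ∑ μ ∈ partitionsOfWeight N, Cl μ • qepsList ε μ with hQl
  set Qm := ∑ μ ∈ partitionsOfWeight N, Cm μ • qepsList ε μ with hQm
  have hrel : ∀ n : ℕ, 1 ≤ n → η n = τ n * c ^ n := fun n hn => by
    rw [hη n hn, hτ n hn]
  have hsa := X0_selfadjoint ε η τ c hrel Ql Qm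
  rw [hXl, hXm, bform_smul_left, bform_smul_right] at hsa
  have hne : eigval a b l ≠ eigval a b m := hsep l hl m hm hlm
  have hz : (eigval a b l - eigval a b m) * bform ε Ql Qm = 0 := by
    rw [sub_mul, hsa, sub_self]
  rcases mul_eq_zero.mp hz with h | h
  · exact absurd (sub_eq_zero.mp h) hne
  · exact h
end

section
/- Let F be a field, a, b ∈ F, and let m ≥ n ≥ 1 be integers. Assume b^i ≠ 1 for 1 ≤ i ≤ n and b^{m−n+i} ≠ a for 1 ≤ i ≤ n. Define g_0 = 1 and, recursively for 1 ≤ i ≤ n, g_i = [(1−a)(b^{m−n+2i}−1)/((1−b^i)(b^{m−n+i}−a))] · Σ_{j=0}^{i−1} g_j. Then for every 1 ≤ i ≤ n, g_i = [Π_{k=0}^{i−1}(1−a b^k) / Π_{k=1}^{i}(1−b^k)] · [Π_{k=1}^{i−1}(b^{m−n+k}−1) / Π_{k=1}^{i}(b^{m−n+k}−a)] · (b^{m−n+2i}−1). -/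
/-- **Theorem 4.7 (Jing–Józefiak formula)** : the coefficients defined by the
recursion `g_0 = 1`, `g_i = (1-a)(b^{m-n+2i}-1)/((1-b^i)(b^{m-n+i}-a)) · Σ_{j<i} g_j`
are given in closed form by
`g_i = [Π_{k=0}^{i-1}(1-a b^k)/Π_{k=1}^{i}(1-b^k)]
 · [Π_{k=1}^{i-1}(b^{m-n+k}-1)/Π_{k=1}^{i}(b^{m-n+k}-a)] · (b^{m-n+2i}-1)`. -/
theorem jing_jozefiak_formula
    (F : Type*) [Field F] (a b : F) (m n : ℕ) (hmn : n ≤ m) (hn : 1 ≤ n)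
    (hb : ∀ i : ℕ, 1 ≤ i → i ≤ n → b ^ i ≠ 1)
    (hba : ∀ i : ℕ, 1 ≤ i → i ≤ n → b ^ (m - n + i) ≠ a)
    (g : ℕ → F) (hg0 : g 0 = 1)
    (hrec : ∀ i : ℕ, 1 ≤ i → i ≤ n →
      g i = (1 - a) * (b ^ (m - n + 2 * i) - 1) /
          ((1 - b ^ i) * (b ^ (m - n + i) - a)) * ∑ j ∈ Finset.range i, g j) :
    ∀ i : ℕ, 1 ≤ i → i ≤ n →
      g i = (∏ k ∈ Finset.range i, (1 - a * b ^ k)) /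
              (∏ k ∈ Finset.Icc 1 i, (1 - b ^ k)) *
            ((∏ k ∈ Finset.Icc 1 (i - 1), (b ^ (m - n + k) - 1)) /
              (∏ k ∈ Finset.Icc 1 i, (b ^ (m - n + k) - a))) *
            (b ^ (m - n + 2 * i) - 1) := by
  set c := m - n with hc
  have hb' : ∀ i : ℕ, 1 ≤ i → i ≤ n → (1 : F) - b ^ i ≠ 0 := fun i h1 h2 =>
    sub_ne_zero.mpr (Ne.symm (hb i h1 h2))
  have hba' : ∀ i : ℕ, 1 ≤ i → i ≤ n → b ^ (c + i) - a ≠ 0 := fun i h1 h2 =>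
    sub_ne_zero.mpr (hba i h1 h2)
  -- closed form for the partial sums
  have key : ∀ i : ℕ, i ≤ n → ∑ j ∈ Finset.range (i + 1), g j =
      ∏ k ∈ Finset.Icc 1 i,
        ((1 - a * b ^ k) * (b ^ (c + k) - 1) / ((1 - b ^ k) * (b ^ (c + k) - a))) := by
    intro i
    induction i with
    | zero => intro _; simp [hg0]
    | succ i ih =>
      intro hin
      have hi : i ≤ n := Nat.le_of_succ_le hin
      rw [Finset.sum_range_succ, hrec (i + 1) (Nat.le_add_left 1 i) hin, ih hi,
        Finset.prod_Icc_succ_top (Nat.le_add_left 1 i)]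
      set S := ∏ k ∈ Finset.Icc 1 i,
        ((1 - a * b ^ k) * (b ^ (c + k) - 1) / ((1 - b ^ k) * (b ^ (c + k) - a)))
      have h1 : (1 : F) - b ^ (i + 1) ≠ 0 := hb' (i + 1) (Nat.le_add_left 1 i) hin
      have h2 : b ^ (c + (i + 1)) - a ≠ 0 := hba' (i + 1) (Nat.le_add_left 1 i) hin
      field_simp
      ring
  intro i h1 hin
  obtain ⟨j, rfl⟩ : ∃ j, i = j + 1 := ⟨i - 1, (Nat.succ_pred_eq_of_pos h1).symm⟩
  have hj : j ≤ n := Nat.le_of_succ_le hin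
  rw [hrec (j + 1) (Nat.le_add_left 1 j) hin, key j hj]
  simp only [Nat.add_sub_cancel]
  -- split the prod of quotients
  have hsplit : ∏ k ∈ Finset.Icc 1 j,
      ((1 - a * b ^ k) * (b ^ (c + k) - 1) / ((1 - b ^ k) * (b ^ (c + k) - a)))
      = (∏ k ∈ Finset.Icc 1 j, (1 - a * b ^ k)) * (∏ k ∈ Finset.Icc 1 j, (b ^ (c + k) - 1)) /
        ((∏ k ∈ Finset.Icc 1 j, (1 - b ^ k)) * (∏ k ∈ Finset.Icc 1 j, (b ^ (c + k) - a))) := by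
    rw [Finset.prod_div_distrib, Finset.prod_mul_distrib, Finset.prod_mul_distrib]
  rw [hsplit]
  -- peel off factors
  have hA : ∏ k ∈ Finset.range (j + 1), (1 - a * b ^ k)
      = (1 - a) * ∏ k ∈ Finset.Icc 1 j, (1 - a * b ^ k) := by
    rw [Finset.prod_range_succ', ← Finset.Ico_add_one_right_eq_Icc, Finset.prod_Ico_eq_prod_range]
    simp [mul_comm, add_comm]
  have hC : ∏ k ∈ Finset.Icc 1 (j + 1), (1 - b ^ k)
      = (∏ k ∈ Finset.Icc 1 j, (1 - b ^ k)) * (1 - b ^ (j + 1)) :=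
    Finset.prod_Icc_succ_top (Nat.le_add_left 1 j) _
  have hD : ∏ k ∈ Finset.Icc 1 (j + 1), (b ^ (c + k) - a)
      = (∏ k ∈ Finset.Icc 1 j, (b ^ (c + k) - a)) * (b ^ (c + (j + 1)) - a) :=
    Finset.prod_Icc_succ_top (Nat.le_add_left 1 j) _
  rw [hA, hC, hD]
  have hCne : (∏ k ∈ Finset.Icc 1 j, (1 - b ^ k)) ≠ 0 :=
    Finset.prod_ne_zero_iff.mpr fun k hk => hb' k (Finset.mem_Icc.mp hk).1
      (le_trans (Finset.mem_Icc.mp hk).2 hj)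
  have hDne : (∏ k ∈ Finset.Icc 1 j, (b ^ (c + k) - a)) ≠ 0 :=
    Finset.prod_ne_zero_iff.mpr fun k hk => hba' k (Finset.mem_Icc.mp hk).1
      (le_trans (Finset.mem_Icc.mp hk).2 hj)
  have h1' : (1 : F) - b ^ (j + 1) ≠ 0 := hb' (j + 1) (Nat.le_add_left 1 j) hin
  have h2' : b ^ (c + (j + 1)) - a ≠ 0 := hba' (j + 1) (Nat.le_add_left 1 j) hin
  field_simp
end

section
/- Let λ and μ be partitions of the same weight with μ ≥ λ in dominance order, and let ν be any partition. Then μ∪ν ≥ λ∪ν in dominance order. -/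
lemma take_succ_sum_le (s : List ℕ) (a i : ℕ) (hle : ∀ x ∈ s, x ≤ a) :
    (s.take (i+1)).sum ≤ a + (s.take i).sum := by
  rw [List.take_succ, List.sum_append]
  rcases h : s[i]? with _ | x
  · simp
  · have hx : x ∈ s := List.mem_of_getElem? h
    simp only [h, Option.toList_some, List.sum_cons, List.sum_nil, add_zero]
    have := hle x hx
    omega

lemma sublist_sum_le {t s : List ℕ} (hsub : List.Sublist t s) :
    s.Pairwise (· ≥ ·) → ∀ i, t.length ≤ i → t.sum ≤ (s.take i).sum := by
  induction hsub with
  | slnil => simp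
  | cons a hsub ih =>
    intro hs i hi
    rw [List.pairwise_cons] at hs
    refine (ih hs.2 i hi).trans ?_
    cases i with
    | zero => simp
    | succ n =>
      have := take_succ_sum_le _ a n (fun x hx => hs.1 x hx)
      simpa using this
  | cons_cons a hsub ih =>
    intro hs i hi
    rw [List.pairwise_cons] at hs
    cases i with
    | zero => simp at hi
    | succ n =>
      simp only [List.take_succ_cons, List.sum_cons]
      have := ih hs.2 n (by simpa using hi)
      omega

lemma key_s18 (s : List ℕ) (hs : s.Pairwise (· ≥ ·)) (t : Multiset ℕ) (ht : t ≤ ↑s)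
    (i : ℕ) (hc : Multiset.card t ≤ i) : t.sum ≤ (s.take i).sum := by
  obtain ⟨t₀, rfl⟩ := t.exists_rep
  rw [Multiset.quot_mk_to_coe] at *
  rw [Multiset.coe_le] at ht
  obtain ⟨t', hperm, hsub⟩ := ht
  have hsum : (t₀ : Multiset ℕ).sum = t'.sum := by
    rw [Multiset.sum_coe, hperm.sum_eq]
  rw [hsum]
  exact sublist_sum_le hsub hs i (by
    have : t'.length = Multiset.card (t₀ : Multiset ℕ) := by
      rw [Multiset.coe_card, hperm.length_eq]
    omega)

/-- **Union property of dominance order.**  If `μ ≥ λ` (same weight) and `ν` is any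
partition then `μ∪ν ≥ λ∪ν`, where `∪` adds multiplicities (i.e. reorders the
concatenation decreasingly). -/
theorem dominance_union
    (l μ ν : List ℕ)
    (hl : IsPartitionList l) (hμ : IsPartitionList μ) (hν : IsPartitionList ν)
    (hw : μ.sum = l.sum) (hdom : Dominates μ l) :
    Dominates (sortDesc ((μ : Multiset ℕ) + (ν : Multiset ℕ)))
      (sortDesc ((l : Multiset ℕ) + (ν : Multiset ℕ))) := by
  intro i
  set t : Multiset ℕ := ↑((sortDesc ((l : Multiset ℕ) + (ν : Multiset ℕ))).take i) with hst
  have hsortl : ((sortDesc ((l : Multiset ℕ) + (ν : Multiset ℕ))) : Multiset ℕ) = ↑l + ↑ν :=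
    Multiset.sort_eq _ _
  have ht_le : t ≤ ↑l + ↑ν := by
    rw [← hsortl]
    exact Multiset.coe_le.2 (List.take_sublist _ _).subperm
  have htcard : Multiset.card t ≤ i := by
    rw [hst, Multiset.coe_card]
    simpa using List.length_take_le i _
  set a : Multiset ℕ := t ∩ ↑l with hsa
  set b : Multiset ℕ := t - a with hsb
  have hat : a ≤ t := by rw [hsa]; exact Multiset.inter_le_left
  have hab : a + b = t := add_tsub_cancel_of_le hat
  have ha : a ≤ ↑l := by rw [hsa]; exact Multiset.inter_le_right
  have hb : b ≤ ↑ν := by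
    rw [Multiset.le_iff_count]
    intro x
    have h1 : Multiset.count x t ≤ Multiset.count x (↑l : Multiset ℕ) + Multiset.count x (↑ν : Multiset ℕ) := by
      have := Multiset.count_le_of_le x ht_le
      simpa [Multiset.count_add] using this
    rw [hsb, Multiset.count_sub, hsa, Multiset.count_inter]
    omega
  set j := Multiset.card a with hj
  have hasum : a.sum ≤ (μ.take j).sum := by
    refine (key_s18 l hl.1 a ha j le_rfl).trans (hdom j)
  set u : Multiset ℕ := ↑(μ.take j) + b with hsu
  have hu_le : u ≤ ↑μ + ↑ν :=
    add_le_add (Multiset.coe_le.2 (List.take_sublist _ _).subperm) hb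
  have hucard : Multiset.card u ≤ i := by
    rw [hsu, Multiset.card_add, Multiset.coe_card]
    have h1 : (μ.take j).length ≤ j := by simpa using List.length_take_le j μ
    have h2 : j + Multiset.card b = Multiset.card t := by
      rw [← hab, Multiset.card_add, hj]
    omega
  have htu : t.sum ≤ u.sum := by
    rw [← hab, Multiset.sum_add, hsu, Multiset.sum_add, Multiset.sum_coe]
    omega
  have hfinal : u.sum ≤ ((sortDesc ((μ : Multiset ℕ) + (ν : Multiset ℕ))).take i).sum := by
    refine key_s18 _ (Multiset.pairwise_sort _ _) u ?_ i hucard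
    rw [Multiset.sort_eq]
    exact hu_le
  have : t.sum = ((sortDesc ((l : Multiset ℕ) + (ν : Multiset ℕ))).take i).sum := by
    rw [hst, Multiset.sum_coe]
  omega
end
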